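/- arXiv:2605.27307 — 2 statements merged into one kernel-verified Lean document; each statement's English description precedes it below -/
import Mathlib

section
/- Let n ≥ 3 be an integer and let m ≥ 1 be an integer satisfying 3(m−1)(m+2) < (n−1)(n−2) (in particular this holds for the largest integer m with (3/2)(m−1)(m+2) < C(n−1,2)). Then for every integer t with C(n,3) + 1 ≤ t ≤ C(n,3) + C(m+1,2) − 1, we have φ(t) ≤ n − 1. -/
open Finset Matrix

/-- The sign `[T : e]` of an edge `e` in a triangle `T`. -/
noncomputable def triSign (T e : Finset ℕ) : ℝ :=
  if e ⊆ T ∧ e.card = 2 ∧ T.card = 3 then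
    if (T \ e).max = T.max ∨ (T \ e).min = T.min then 1 else -1
  else 0

/-- A triangle family: a nonempty finite set of 3-element subsets of ℕ. -/
def IsTriFam (F : Finset (Finset ℕ)) : Prop :=
  F.Nonempty ∧ ∀ T ∈ F, T.card = 3

/-- The edges of the support graph of a triangle family. -/
def edgesOf (F : Finset (Finset ℕ)) : Finset (Finset ℕ) :=
  F.biUnion fun T => T.powersetCard 2

/-- The vertices of the support graph of a triangle family. -/
def vertsOf (F : Finset (Finset ℕ)) : Finset ℕ :=
  F.biUnion id

/-- The signed edge-triangle incidence matrix of a triangle family. -/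
noncomputable def delta1 (F : Finset (Finset ℕ)) :
    Matrix {T // T ∈ F} {e // e ∈ edgesOf F} ℝ :=
  Matrix.of fun T e => triSign T.1 e.1

/-- The smallest positive eigenvalue of a matrix. -/
noncomputable def lambdaMinPos {m : Type*} [Fintype m] (M : Matrix m m ℝ) : ℝ :=
  sInf {μ : ℝ | 0 < μ ∧ ∃ v : m → ℝ, v ≠ 0 ∧ M.mulVec v = μ • v}

/-- `λ(𝒯)`: the smallest positive eigenvalue of `δ₁(𝒯)ᵀ δ₁(𝒯)`. -/
noncomputable def lam (F : Finset (Finset ℕ)) : ℝ :=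
  lambdaMinPos ((delta1 F)ᵀ * delta1 F)

/-- The neighborhood of `x` in the support graph `Γ₀(F)`. -/
def nbrs (F : Finset (Finset ℕ)) (x : ℕ) : Finset ℕ :=
  (vertsOf F).filter fun y => x ≠ y ∧ ∃ T ∈ F, x ∈ T ∧ y ∈ T

/-- `φ(t)`: the maximum of `λ(𝒯)` over triangle families with `|𝒯| = t`. -/
noncomputable def phi (t : ℕ) : ℝ :=
  sSup {r : ℝ | ∃ F : Finset (Finset ℕ), IsTriFam F ∧ F.card = t ∧ lam F = r}

/-- `Λ(t) = max_{1 ≤ s ≤ t} φ(s)`. -/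
noncomputable def Lam (t : ℕ) : ℝ :=
  sSup {r : ℝ | ∃ s : ℕ, 1 ≤ s ∧ s ≤ t ∧ phi s = r}

/-- `H(n) = min{ s ≥ 1 : φ(C(n,3)+s) > n - 1 }`. -/
noncomputable def Hfun (n : ℕ) : ℕ :=
  sInf {s : ℕ | 1 ≤ s ∧ (n : ℝ) - 1 < phi (n.choose 3 + s)}

/-- The triangle family `𝒯_{c,b}`: all 3-cliques of `K_c ∨ (b isolated vertices)`. -/
def Tcb (c b : ℕ) : Finset (Finset ℕ) :=
  ((Finset.Icc 1 c).powersetCard 3) ∪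
    (Finset.Icc (c+1) (c+b)).biUnion
      (fun i => ((Finset.Icc 1 c).powersetCard 2).image (fun p => insert i p))

section helperLemmas

lemma mem_edgesOf_iff {F : Finset (Finset ℕ)} {e : Finset ℕ} :
    e ∈ edgesOf F ↔ ∃ T ∈ F, e ⊆ T ∧ e.card = 2 := by
  simp [edgesOf, Finset.mem_powersetCard]

lemma triSign_mul_self_le_one (T e : Finset ℕ) : triSign T e * triSign T e ≤ 1 := by
  unfold triSign; split_ifs <;> norm_num

lemma triSign_mul_self {T e : Finset ℕ} (h : e ⊆ T) (h2 : e.card = 2) (h3 : T.card = 3) :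
    triSign T e * triSign T e = 1 := by
  unfold triSign
  rw [if_pos ⟨h, h2, h3⟩]
  split_ifs <;> norm_num

lemma subset_of_triSign_ne_zero {T e : Finset ℕ} (h : triSign T e ≠ 0) : e ⊆ T := by
  unfold triSign at h
  by_cases h' : e ⊆ T ∧ e.card = 2 ∧ T.card = 3
  · exact h'.1
  · rw [if_neg h'] at h; simp at h

lemma union_card_three {e f : Finset ℕ} (he : e.card = 2) (hf : f.card = 2) (hne : f ≠ e) :
    3 ≤ (e ∪ f).card := by
  by_contra hlt
  push_neg at hlt
  have hsub : e ⊆ e ∪ f := Finset.subset_union_left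
  have : e = e ∪ f := Finset.eq_of_subset_of_card_le hsub (by omega)
  have hf' : f ⊆ e := by rw [this]; exact Finset.subset_union_right
  exact hne (Finset.eq_of_subset_of_card_le hf' (by omega))

lemma exists_small_eig {ι : Type*} [Fintype ι] [DecidableEq ι] (M : Matrix ι ι ℝ)
    (hM : M.IsHermitian) (B : ℝ) (hB : 0 ≤ B) (x : EuclideanSpace ℝ ι)
    (h1 : 0 < M.mulVec x ⬝ᵥ x) (h2 : M.mulVec x ⬝ᵥ M.mulVec x ≤ B * (M.mulVec x ⬝ᵥ x)) :
    ∃ μ : ℝ, 0 < μ ∧ μ ≤ B ∧ ∃ v : ι → ℝ, v ≠ 0 ∧ M.mulVec v = μ • v := by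
  by_contra hcon
  push_neg at hcon
  set b := hM.eigenvectorBasis with hb
  set μ := hM.eigenvalues with hμ
  set c : ι → ℝ := fun i => b.repr x i with hc
  have hMT : Mᵀ = M := by
    ext i j
    have := congrFun (congrFun hM.eq i) j
    simpa [Matrix.conjTranspose_apply] using this
  have heig : ∀ i, μ i ≤ 0 ∨ B < μ i := by
    intro i
    by_contra hi
    push_neg at hi
    exact hcon (μ i) hi.1 hi.2 (b i)
      (by simpa using b.orthonormal.ne_zero i) (hM.mulVec_eigenvectorBasis i)
  have hinner : ∀ u w : ι → ℝ, u ⬝ᵥ w = ∑ i, b.repr (WithLp.toLp 2 u) i * b.repr (WithLp.toLp 2 w) i := by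
    intro u w
    have : (inner ℝ (WithLp.toLp 2 u) (WithLp.toLp 2 w) : ℝ) = inner ℝ (b.repr (WithLp.toLp 2 u)) (b.repr (WithLp.toLp 2 w)) := (b.repr.inner_map_map _ _).symm
    simp only [PiLp.inner_apply, RCLike.inner_apply, starRingEnd_apply, star_trivial] at this
    simpa [dotProduct, mul_comm] using this
  have hrepr : ∀ i, b.repr (WithLp.toLp 2 (M.mulVec x)) i = μ i * c i := by
    intro i
    have e1 : b.repr (WithLp.toLp 2 (M.mulVec x)) i = (b i : EuclideanSpace ℝ ι) ⬝ᵥ (M.mulVec x) := by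
      rw [b.repr_apply_apply]
      simp [PiLp.inner_apply, RCLike.inner_apply, dotProduct, mul_comm]
    have e2 : (b i : EuclideanSpace ℝ ι) ⬝ᵥ (M.mulVec x) = (M.mulVec (b i)) ⬝ᵥ x := by
      rw [dotProduct_mulVec, ← Matrix.mulVec_transpose, hMT]
    have e3 : M.mulVec (b i) = μ i • (b i : EuclideanSpace ℝ ι) := hM.mulVec_eigenvectorBasis i
    rw [e1, e2, e3]
    have : (μ i • (b i).ofLp) ⬝ᵥ x.ofLp = μ i * ((b i).ofLp ⬝ᵥ x.ofLp) := by
      simp [dotProduct, Finset.mul_sum, mul_assoc]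
    rw [this]
    congr 1
    simp only [hc]
    rw [b.repr_apply_apply]
    simp [PiLp.inner_apply, RCLike.inner_apply, dotProduct, mul_comm]
  have hsum1 : M.mulVec x ⬝ᵥ x = ∑ i, (μ i * c i) * c i := by
    rw [hinner]
    exact Finset.sum_congr rfl fun i _ => by rw [hrepr i]
  have hsum2 : M.mulVec x ⬝ᵥ M.mulVec x = ∑ i, (μ i * c i) * (μ i * c i) := by
    rw [hinner]
    exact Finset.sum_congr rfl fun i _ => by rw [hrepr i]
  -- find an index with positive contribution
  have hex : ∃ i ∈ Finset.univ, (0:ℝ) < (μ i * c i) * c i := by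
    by_contra hno
    push_neg at hno
    have : M.mulVec x ⬝ᵥ x ≤ 0 := by
      rw [hsum1]; exact Finset.sum_nonpos fun i hi => hno i hi
    linarith
  obtain ⟨i₀, _, hi₀⟩ := hex
  have hμi₀ : B < μ i₀ := by
    rcases heig i₀ with h | h
    · nlinarith [sq_nonneg (c i₀)]
    · exact h
  have hlt : B * (M.mulVec x ⬝ᵥ x) < M.mulVec x ⬝ᵥ M.mulVec x := by
    rw [hsum1, hsum2, Finset.mul_sum]
    apply Finset.sum_lt_sum
    · intro j _
      rcases heig j with h | h
      · nlinarith [sq_nonneg (μ j * c j),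
          mul_nonneg hB (mul_nonneg (neg_nonneg.2 h) (mul_self_nonneg (c j)))]
      · nlinarith [mul_self_nonneg (c j)]
    · exact ⟨i₀, Finset.mem_univ i₀, by nlinarith⟩
  linarith

lemma two_mul_choose_two (j : ℕ) : 2 * (j+1).choose 2 = (j+1) * j := by
  induction j with
  | zero => decide
  | succ j ih =>
    calc 2 * (j+2).choose 2 = 2 * (j+1).choose 1 + 2 * (j+1).choose 2 := by
          rw [Nat.choose_succ_succ]; ring
      _ = 2 * (j+1) + (j+1) * j := by rw [Nat.choose_one_right, ih]
      _ = (j+2) * (j+1) := by ring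

lemma six_mul_choose_three (k : ℕ) : 6 * (k+3).choose 3 = (k+3) * (k+2) * (k+1) := by
  induction k with
  | zero => decide
  | succ k ih =>
    calc 6 * (k+4).choose 3 = 3 * (2 * (k+3).choose 2) + 6 * (k+3).choose 3 := by
          rw [Nat.choose_succ_succ]; ring
      _ = 3 * ((k+3) * (k+2)) + (k+3) * (k+2) * (k+1) := by
          rw [two_mul_choose_two (k+2), ih]
      _ = (k+4) * (k+3) * (k+2) := by ring

lemma main_contra (F : Finset (Finset ℕ)) (hF : IsTriFam F) (n m : ℕ)
    (hn : 3 ≤ n) (hm : 1 ≤ m)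
    (hineq : 3 * (m - 1) * (m + 2) < (n - 1) * (n - 2))
    (ht1 : n.choose 3 + 1 ≤ F.card)
    (ht2 : F.card ≤ n.choose 3 + (m + 1).choose 2 - 1)
    (hmin : ∀ e ∈ edgesOf F, n - 2 ≤ (F.filter fun T => e ⊆ T).card) : False := by
  classical
  set t := F.card with htdef
  set V := vertsOf F with hVdef
  set E := edgesOf F with hEdef
  have hTV : ∀ T ∈ F, T ⊆ V := fun T hT => Finset.subset_biUnion_of_mem id hT
  have hEprop : ∀ e ∈ E, e.card = 2 ∧ e ⊆ V := by
    intro e he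
    obtain ⟨T, hT, hsub, hcard⟩ := mem_edgesOf_iff.mp he
    exact ⟨hcard, hsub.trans (hTV T hT)⟩
  -- |V| ≥ n + 1
  have hVcard : n + 1 ≤ V.card := by
    by_contra hlt
    push_neg at hlt
    have hsub : F ⊆ V.powersetCard 3 := fun T hT =>
      Finset.mem_powersetCard.mpr ⟨hTV T hT, hF.2 T hT⟩
    have h1 : t ≤ V.card.choose 3 := by
      calc t ≤ (V.powersetCard 3).card := Finset.card_le_card hsub
        _ = V.card.choose 3 := Finset.card_powersetCard 3 V
    have h2 : V.card.choose 3 ≤ n.choose 3 := Nat.choose_le_choose 3 (by omega)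
    omega
  -- degree bound: every vertex is in at least n - 1 edges
  have hdeg : ∀ x ∈ V, n - 1 ≤ (E.filter fun e => x ∈ e).card := by
    intro x hx
    obtain ⟨T, hT, hxT⟩ := Finset.mem_biUnion.mp hx
    have hT3 : T.card = 3 := hF.2 T hT
    obtain ⟨y, hyT, hyx⟩ := Finset.exists_mem_ne (show 1 < T.card by omega) x
    set e₁ : Finset ℕ := insert x {y} with he₁def
    have hxne : x ∉ ({y} : Finset ℕ) := by simp [Ne.symm hyx]
    have he₁card : e₁.card = 2 := by
      rw [he₁def, Finset.card_insert_of_notMem hxne, Finset.card_singleton]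
    have he₁sub : e₁ ⊆ T := by
      rw [he₁def]
      exact Finset.insert_subset hxT (Finset.singleton_subset_iff.mpr hyT)
    have he₁E : e₁ ∈ E := mem_edgesOf_iff.mpr ⟨T, hT, he₁sub, he₁card⟩
    have hxe₁ : x ∈ e₁ := by rw [he₁def]; exact Finset.mem_insert_self x {y}
    set S := F.filter (fun T' => e₁ ⊆ T') with hSdef
    have hScard : n - 2 ≤ S.card := hmin e₁ he₁E
    set g : Finset ℕ → Finset ℕ := fun T' => insert x (T' \ e₁) with hgdef
    have hSfact : ∀ T' ∈ S, e₁ ⊆ T' ∧ T' ∈ F ∧ (T' \ e₁).card = 1 := by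
      intro T' hT'
      rw [hSdef, Finset.mem_filter] at hT'
      refine ⟨hT'.2, hT'.1, ?_⟩
      rw [Finset.card_sdiff_of_subset hT'.2, hF.2 T' hT'.1, he₁card]
    have hinj : Set.InjOn g (S : Set (Finset ℕ)) := by
      intro T₁ h₁ T₂ h₂ heq
      have h₁' := hSfact T₁ h₁
      have h₂' := hSfact T₂ h₂
      have hx₁ : x ∉ T₁ \ e₁ := fun h => (Finset.mem_sdiff.mp h).2 hxe₁
      have hx₂ : x ∉ T₂ \ e₁ := fun h => (Finset.mem_sdiff.mp h).2 hxe₁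
      have : T₁ \ e₁ = T₂ \ e₁ := by
        have := congrArg (fun s => Finset.erase s x) heq
        simpa [hgdef, Finset.erase_insert, hx₁, hx₂] using this
      calc T₁ = e₁ ∪ (T₁ \ e₁) := (Finset.union_sdiff_of_subset h₁'.1).symm
        _ = e₁ ∪ (T₂ \ e₁) := by rw [this]
        _ = T₂ := Finset.union_sdiff_of_subset h₂'.1
    have himg : S.image g ⊆ (E.filter fun e => x ∈ e).erase e₁ := by
      intro e he
      obtain ⟨T', hT', rfl⟩ := Finset.mem_image.mp he
      obtain ⟨hsub', hT'F, hcard1⟩ := hSfact T' hT'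
      obtain ⟨z, hz⟩ := Finset.card_eq_one.mp hcard1
      have hzmem : z ∈ T' \ e₁ := by rw [hz]; exact Finset.mem_singleton_self z
      have hzT' : z ∈ T' := (Finset.mem_sdiff.mp hzmem).1
      have hze₁ : z ∉ e₁ := (Finset.mem_sdiff.mp hzmem).2
      have hzx : z ≠ x := fun h => hze₁ (h ▸ hxe₁)
      have hgval : g T' = insert x {z} := by rw [hgdef]; simp [hz]
      have hgcard : (g T').card = 2 := by
        rw [hgval, Finset.card_insert_of_notMem (by simp [Ne.symm hzx]),
          Finset.card_singleton]
      have hgsub : g T' ⊆ T' := by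
        rw [hgval]
        exact Finset.insert_subset (hsub' hxe₁) (Finset.singleton_subset_iff.mpr hzT')
      refine Finset.mem_erase.mpr ⟨?_, Finset.mem_filter.mpr
        ⟨mem_edgesOf_iff.mpr ⟨T', hT'F, hgsub, hgcard⟩, by rw [hgval]; exact Finset.mem_insert_self _ _⟩⟩
      intro hcontra
      apply hze₁
      rw [← hcontra, hgval]
      simp
    have hcount : S.card + 1 ≤ (E.filter fun e => x ∈ e).card := by
      have h1 : (S.image g).card = S.card := Finset.card_image_of_injOn hinj
      have h2 : (S.image g).card ≤ ((E.filter fun e => x ∈ e).erase e₁).card :=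
        Finset.card_le_card himg
      have h3 : e₁ ∈ E.filter fun e => x ∈ e := Finset.mem_filter.mpr ⟨he₁E, hxe₁⟩
      have h4 : ((E.filter fun e => x ∈ e).erase e₁).card
          = (E.filter fun e => x ∈ e).card - 1 := Finset.card_erase_of_mem h3
      have h5 : 1 ≤ (E.filter fun e => x ∈ e).card := Finset.card_pos.mpr ⟨e₁, h3⟩
      omega
    omega
  -- handshake: (n-1) * |V| ≤ 2 * |E|
  have hhand : (n - 1) * V.card ≤ 2 * E.card := by
    have hdouble : ∑ x ∈ V, (E.filter fun e => x ∈ e).card = 2 * E.card := by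
      calc ∑ x ∈ V, (E.filter fun e => x ∈ e).card
          = ∑ x ∈ V, ∑ e ∈ E, if x ∈ e then 1 else 0 :=
            Finset.sum_congr rfl fun x _ => Finset.card_filter _ _
        _ = ∑ e ∈ E, ∑ x ∈ V, if x ∈ e then 1 else 0 := Finset.sum_comm
        _ = ∑ e ∈ E, (V.filter fun x => x ∈ e).card :=
            Finset.sum_congr rfl fun e _ => (Finset.card_filter _ _).symm
        _ = ∑ e ∈ E, 2 := by
            apply Finset.sum_congr rfl
            intro e he
            have : V.filter (fun x => x ∈ e) = e := by
              rw [Finset.filter_mem_eq_inter, Finset.inter_eq_right]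
              exact (hEprop e he).2
            rw [this, (hEprop e he).1]
        _ = 2 * E.card := by rw [Finset.sum_const, smul_eq_mul, mul_comm]
    calc (n - 1) * V.card = ∑ _x ∈ V, (n - 1) := by
          rw [Finset.sum_const, smul_eq_mul, mul_comm]
      _ ≤ ∑ x ∈ V, (E.filter fun e => x ∈ e).card := Finset.sum_le_sum hdeg
      _ = 2 * E.card := hdouble
  -- edge-triangle incidence: (n-2) * |E| ≤ 3 * t
  have hinc : (n - 2) * E.card ≤ 3 * t := by
    have hdouble : ∑ e ∈ E, (F.filter fun T => e ⊆ T).card = 3 * t := by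
      calc ∑ e ∈ E, (F.filter fun T => e ⊆ T).card
          = ∑ e ∈ E, ∑ T ∈ F, if e ⊆ T then 1 else 0 :=
            Finset.sum_congr rfl fun e _ => Finset.card_filter _ _
        _ = ∑ T ∈ F, ∑ e ∈ E, if e ⊆ T then 1 else 0 := Finset.sum_comm
        _ = ∑ T ∈ F, (E.filter fun e => e ⊆ T).card :=
            Finset.sum_congr rfl fun T _ => (Finset.card_filter _ _).symm
        _ = ∑ T ∈ F, 3 := by
            apply Finset.sum_congr rfl
            intro T hT
            have hfe : E.filter (fun e => e ⊆ T) = T.powersetCard 2 := by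
              ext e
              simp only [Finset.mem_filter, Finset.mem_powersetCard]
              constructor
              · rintro ⟨heE, hsub⟩
                exact ⟨hsub, (hEprop e heE).1⟩
              · rintro ⟨hsub, hcard⟩
                exact ⟨mem_edgesOf_iff.mpr ⟨T, hT, hsub, hcard⟩, hsub⟩
            rw [hfe, Finset.card_powersetCard, hF.2 T hT]; decide
        _ = 3 * t := by rw [Finset.sum_const, smul_eq_mul, mul_comm]
    calc (n - 2) * E.card = ∑ _e ∈ E, (n - 2) := by
          rw [Finset.sum_const, smul_eq_mul, mul_comm]
      _ ≤ ∑ e ∈ E, (F.filter fun T => e ⊆ T).card := Finset.sum_le_sum hmin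
      _ = 3 * t := hdouble
  -- final arithmetic
  obtain ⟨k, rfl⟩ : ∃ k, n = k + 3 := ⟨n - 3, by omega⟩
  obtain ⟨j, rfl⟩ : ∃ j, m = j + 1 := ⟨m - 1, by omega⟩
  have hineq' : 3 * j * (j + 3) < (k + 2) * (k + 1) := hineq
  have hhand' : (k + 2) * V.card ≤ 2 * E.card := hhand
  have hinc' : (k + 1) * E.card ≤ 3 * t := hinc
  have hA : (k+2) * (k+1) * (k+4) ≤ 6 * t := by
    calc (k+2) * (k+1) * (k+4) ≤ (k+1) * ((k+2) * V.card) := by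
          have : k + 4 ≤ V.card := hVcard
          calc (k+2) * (k+1) * (k+4) = (k+1) * ((k+2) * (k+4)) := by ring
            _ ≤ (k+1) * ((k+2) * V.card) :=
              Nat.mul_le_mul_left _ (Nat.mul_le_mul_left _ this)
      _ ≤ (k+1) * (2 * E.card) := Nat.mul_le_mul_left _ hhand'
      _ = 2 * ((k+1) * E.card) := by ring
      _ ≤ 2 * (3 * t) := Nat.mul_le_mul_left _ hinc'
      _ = 6 * t := by ring
  have hch3 : 6 * (k+3).choose 3 = (k+3) * (k+2) * (k+1) := six_mul_choose_three k
  have hch2 : 2 * ((j+1)+1).choose 2 = ((j+1)+1) * (j+1) := two_mul_choose_two (j+1)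
  have hc2pos : 1 ≤ ((j+1)+1).choose 2 := Nat.choose_pos (by omega)
  have ht2' : 6 * t + 6 ≤ 6 * (k+3).choose 3 + 3 * (2 * ((j+1)+1).choose 2) := by omega
  have hB : 6 * t + 6 ≤ (k+3) * (k+2) * (k+1) + 3 * j * (j+3) + 6 := by
    rw [hch2] at ht2'
    have hr : 3 * (((j+1)+1) * (j+1)) = 3 * j * (j+3) + 6 := by ring
    omega
  have hC : (k+3) * (k+2) * (k+1) + (k+2) * (k+1) ≤ 6 * t := by
    have hr : (k+2) * (k+1) * (k+4) = (k+3) * (k+2) * (k+1) + (k+2) * (k+1) := by ring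
    omega
  omega

lemma lam_le_d_add_two (F : Finset (Finset ℕ)) (hF : IsTriFam F) (e₀ : Finset ℕ)
    (he₀ : e₀ ∈ edgesOf F) :
    lam F ≤ ((F.filter fun T => e₀ ⊆ T).card : ℝ) + 2 := by
  classical
  obtain ⟨T₀, hT₀F, hT₀sub, he₀card⟩ := mem_edgesOf_iff.mp he₀
  set d : ℕ := (F.filter fun T => e₀ ⊆ T).card with hd
  have hd1 : 1 ≤ d := Finset.card_pos.mpr ⟨T₀, Finset.mem_filter.mpr ⟨hT₀F, hT₀sub⟩⟩
  set M : Matrix {e // e ∈ edgesOf F} {e // e ∈ edgesOf F} ℝ := (delta1 F)ᵀ * delta1 F with hM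
  have hHerm : M.IsHermitian := by
    simpa [Matrix.conjTranspose_eq_transpose_of_trivial] using Matrix.isHermitian_conjTranspose_mul_self (delta1 F)
  set e₀' : {e // e ∈ edgesOf F} := ⟨e₀, he₀⟩ with he₀'
  set x : EuclideanSpace ℝ {e // e ∈ edgesOf F} :=
    WithLp.toLp 2 (fun f => if f = e₀' then (1:ℝ) else 0) with hx
  have hdp : ∀ u w : {e // e ∈ edgesOf F} → ℝ, u ⬝ᵥ w = ∑ f, u f * w f := fun u w => rfl
  -- the matrix entries
  have hMapp : ∀ f g : {e // e ∈ edgesOf F},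
      M f g = ∑ T ∈ F, triSign T f.1 * triSign T g.1 := by
    intro f g
    rw [hM, Matrix.mul_apply]
    exact (Finset.sum_subtype F (fun T => Iff.rfl)
      (fun T => triSign T f.1 * triSign T g.1)).symm
  -- mulVec of indicator
  have hMx : ∀ f, M.mulVec x f = M f e₀' := by
    intro f
    simp only [Matrix.mulVec, dotProduct, hx]
    simp [Finset.sum_ite_eq']
  -- diagonal entry
  have hdiag : M e₀' e₀' = (d : ℝ) := by
    have hterm : ∀ T ∈ F, triSign T e₀'.1 * triSign T e₀'.1
        = if e₀ ⊆ T then (1:ℝ) else 0 := by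
      intro T hT
      by_cases hsub : e₀ ⊆ T
      · rw [if_pos hsub]; exact triSign_mul_self hsub he₀card (hF.2 T hT)
      · rw [if_neg hsub]
        have : triSign T e₀ = 0 := by
          by_contra h; exact hsub (subset_of_triSign_ne_zero h)
        show triSign T e₀ * triSign T e₀ = 0
        rw [this, mul_zero]
    calc M e₀' e₀' = ∑ T ∈ F, triSign T e₀'.1 * triSign T e₀'.1 := hMapp e₀' e₀'
      _ = ∑ T ∈ F, (if e₀ ⊆ T then (1:ℝ) else 0) := Finset.sum_congr rfl hterm
      _ = (d : ℝ) := by rw [Finset.sum_boole]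
  -- off-diagonal entries
  have hoff : ∀ f : {e // e ∈ edgesOf F}, f ≠ e₀' →
      M f e₀' = if e₀ ∪ f.1 ∈ F then triSign (e₀ ∪ f.1) f.1 * triSign (e₀ ∪ f.1) e₀ else 0 := by
    intro f hf
    have hfcard : f.1.card = 2 := by
      obtain ⟨T, _, _, hc⟩ := mem_edgesOf_iff.mp f.2; exact hc
    have hfne : f.1 ≠ e₀ := fun h => hf (Subtype.ext h)
    have hterm : ∀ T ∈ F, triSign T f.1 * triSign T e₀'.1
        = if T = e₀ ∪ f.1 then triSign T f.1 * triSign T e₀ else 0 := by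
      intro T hT
      by_cases hTe : T = e₀ ∪ f.1
      · rw [if_pos hTe]
      · rw [if_neg hTe]
        show triSign T f.1 * triSign T e₀ = 0
        by_contra hne
        have h1 : triSign T f.1 ≠ 0 := fun h => hne (by rw [h, zero_mul])
        have h2 : triSign T e₀ ≠ 0 := fun h => hne (by rw [h, mul_zero])
        have hsub : e₀ ∪ f.1 ⊆ T :=
          Finset.union_subset (subset_of_triSign_ne_zero h2) (subset_of_triSign_ne_zero h1)
        have hcard : 3 ≤ (e₀ ∪ f.1).card := union_card_three he₀card hfcard hfne
        have hT3 : T.card = 3 := hF.2 T hT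
        exact hTe ((Finset.eq_of_subset_of_card_le hsub (by omega)).symm)
    calc M f e₀' = ∑ T ∈ F, triSign T f.1 * triSign T e₀'.1 := hMapp f e₀'
      _ = ∑ T ∈ F, (if T = e₀ ∪ f.1 then triSign T f.1 * triSign T e₀ else 0) :=
          Finset.sum_congr rfl hterm
      _ = _ := Finset.sum_ite_eq' F (e₀ ∪ f.1) (fun T => triSign T f.1 * triSign T e₀)
  -- first dot product
  have hdot1 : M.mulVec x ⬝ᵥ x = (d : ℝ) := by
    rw [hdp]
    have hterm : ∀ f : {e // e ∈ edgesOf F},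
        M.mulVec x f * x f = if f = e₀' then (d : ℝ) else 0 := by
      intro f
      by_cases h : f = e₀'
      · subst h
        rw [hMx, hdiag]
        simp [hx]
      · have : x f = 0 := by simp [hx, h]
        rw [this, mul_zero, if_neg h]
    calc ∑ f, M.mulVec x f * x f = ∑ f, (if f = e₀' then (d:ℝ) else 0) :=
          Finset.sum_congr rfl (fun f _ => hterm f)
      _ = (d : ℝ) := by simp
  -- second dot product bound
  set B : Finset {e // e ∈ edgesOf F} :=
    (Finset.univ.erase e₀').filter (fun f => e₀ ∪ f.1 ∈ F) with hBdef
  have hsq : M.mulVec x ⬝ᵥ M.mulVec x ≤ (d:ℝ)*d + (B.card : ℝ) := by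
    rw [hdp]
    rw [← Finset.add_sum_erase Finset.univ _ (Finset.mem_univ e₀')]
    have hbound : ∀ f ∈ Finset.univ.erase e₀',
        M.mulVec x f * M.mulVec x f ≤ if e₀ ∪ f.1 ∈ F then (1:ℝ) else 0 := by
      intro f hfmem
      have hf : f ≠ e₀' := (Finset.mem_erase.mp hfmem).1
      rw [hMx, hoff f hf]
      split_ifs
      · calc triSign (e₀ ∪ f.1) f.1 * triSign (e₀ ∪ f.1) e₀ *
            (triSign (e₀ ∪ f.1) f.1 * triSign (e₀ ∪ f.1) e₀)
            = (triSign (e₀ ∪ f.1) f.1 * triSign (e₀ ∪ f.1) f.1) *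
              (triSign (e₀ ∪ f.1) e₀ * triSign (e₀ ∪ f.1) e₀) := by ring
          _ ≤ 1 * 1 := by
              apply mul_le_mul (triSign_mul_self_le_one _ _) (triSign_mul_self_le_one _ _)
                (mul_self_nonneg _) zero_le_one
          _ = 1 := by ring
      · simp
    have h1' : M.mulVec x e₀' * M.mulVec x e₀' = (d:ℝ)*d := by rw [hMx, hdiag]
    have h2' : ∑ f ∈ Finset.univ.erase e₀', M.mulVec x f * M.mulVec x f ≤ (B.card : ℝ) := by
      calc ∑ f ∈ Finset.univ.erase e₀', M.mulVec x f * M.mulVec x f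
          ≤ ∑ f ∈ Finset.univ.erase e₀', (if e₀ ∪ f.1 ∈ F then (1:ℝ) else 0) :=
            Finset.sum_le_sum hbound
        _ = (B.card : ℝ) := by rw [Finset.sum_boole]
    rw [h1']
    linarith
  -- counting bound on B
  have hBcard : B.card ≤ 2 * d := by
    rw [hd]
    apply Finset.card_le_mul_card_image_of_maps_to
      (f := fun g : {e // e ∈ edgesOf F} => e₀ ∪ g.1) (t := F.filter fun T => e₀ ⊆ T)
    · intro g hg
      rw [hBdef, Finset.mem_filter] at hg
      exact Finset.mem_filter.mpr ⟨hg.2, Finset.subset_union_left⟩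
    · intro T hT
      rw [Finset.mem_filter] at hT
      have hT3 : T.card = 3 := hF.2 T hT.1
      have he₀mem : e₀ ∈ T.powersetCard 2 := Finset.mem_powersetCard.mpr ⟨hT.2, he₀card⟩
      have hinj : Set.InjOn (fun g : {e // e ∈ edgesOf F} => g.1)
          ((B.filter fun g => e₀ ∪ g.1 = T) : Finset _) := fun a _ b _ h => Subtype.ext h
      calc (B.filter fun g => e₀ ∪ g.1 = T).card
          ≤ ((T.powersetCard 2).erase e₀).card := by
            apply Finset.card_le_card_of_injOn (fun g => g.1) ?_ hinj
            intro g hg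
            rw [Finset.mem_coe, Finset.mem_filter] at hg
            rw [Finset.mem_coe]
            have hgB := hg.1
            rw [hBdef, Finset.mem_filter, Finset.mem_erase] at hgB
            have hgne : g.1 ≠ e₀ := fun h => hgB.1.1 (Subtype.ext h)
            have hgcard : g.1.card = 2 := by
              obtain ⟨T', _, _, hc⟩ := mem_edgesOf_iff.mp g.2; exact hc
            refine Finset.mem_erase.mpr ⟨hgne, Finset.mem_powersetCard.mpr ⟨?_, hgcard⟩⟩
            rw [← hg.2]
            exact Finset.subset_union_right
        _ ≤ 2 := by
            rw [Finset.card_erase_of_mem he₀mem, Finset.card_powersetCard, hT3]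
            decide
  -- apply the spectral lemma
  have hBpos : (0:ℝ) ≤ (d:ℝ) + 2 := by positivity
  have h1 : 0 < M.mulVec x ⬝ᵥ x := by
    rw [hdot1]; exact_mod_cast Nat.lt_of_lt_of_le Nat.zero_lt_one hd1
  have h2 : M.mulVec x ⬝ᵥ M.mulVec x ≤ ((d:ℝ) + 2) * (M.mulVec x ⬝ᵥ x) := by
    rw [hdot1]
    have : (B.card : ℝ) ≤ 2 * d := by exact_mod_cast hBcard
    nlinarith
  obtain ⟨μ, hμpos, hμle, v, hv0, hveq⟩ :=
    exists_small_eig M hHerm ((d:ℝ) + 2) hBpos x h1 h2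
  have : lam F ≤ μ := by
    rw [lam, lambdaMinPos]
    apply csInf_le ⟨0, fun r hr => hr.1.le⟩
    exact ⟨hμpos, v, hv0, by rw [← hM]; exact hveq⟩
  linarith

end helperLemmas

/-- Forbidden interval: if `n ≥ 3` and `m ≥ 1` satisfies `3(m-1)(m+2) < (n-1)(n-2)`,
then `φ(t) ≤ n - 1` for all `C(n,3) + 1 ≤ t ≤ C(n,3) + C(m+1,2) - 1`. -/
theorem stmt10 (n m : ℕ) (hn : 3 ≤ n) (hm : 1 ≤ m)
    (hineq : 3 * (m - 1) * (m + 2) < (n - 1) * (n - 2)) :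
    ∀ t : ℕ, n.choose 3 + 1 ≤ t → t ≤ n.choose 3 + (m + 1).choose 2 - 1 →
      phi t ≤ (n : ℝ) - 1 := by

  intro t ht1 ht2
  have hphi : phi t = sSup {r : ℝ | ∃ F : Finset (Finset ℕ), IsTriFam F ∧ F.card = t ∧ lam F = r} := rfl
  rw [hphi]
  apply Real.sSup_le
  · rintro r ⟨F, hF, hFcard, rfl⟩
    by_cases hcase : ∃ e ∈ edgesOf F, (F.filter fun T => e ⊆ T).card ≤ n - 3
    · obtain ⟨e, he, hdle⟩ := hcase
      have h1 := lam_le_d_add_two F hF e he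
      have h2 : ((F.filter fun T => e ⊆ T).card : ℝ) + 2 ≤ (n : ℝ) - 1 := by
        have hnat : (F.filter fun T => e ⊆ T).card + 3 ≤ n := by omega
        have hc : (((F.filter fun T => e ⊆ T).card + 3 : ℕ) : ℝ) ≤ (n : ℝ) :=
          Nat.cast_le.mpr hnat
        push_cast at hc
        linarith
      linarith
    · exfalso
      push_neg at hcase
      apply main_contra F hF n m hn hm hineq (by omega) (by omega)
      intro e he
      have := hcase e he
      omega
  · have h3 : (3 : ℝ) ≤ (n : ℝ) := by exact_mod_cast hn
    linarith
end

section
/- Let n ≥ 9 be an integer and let 𝒯 be a triangle family with C(n,3) < |𝒯| < C(n+1,3) and λ(𝒯) > n − 1. Then n + 1 ≤ |V(Γ₀(𝒯))| ≤ n + 3. -/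
open Finset Matrix

set_option maxHeartbeats 1600000

section auxspec

variable {m : Type*} [Fintype m] [DecidableEq m]

lemma spec_main (M : Matrix m m ℝ) (hpsd : M.PosSemidef)
    (f : m → ℝ) (β : ℝ) (hβ0 : 0 ≤ β) (hβ1 : β < 1)
    (hf : 0 < ∑ i, f i * f i)
    (hker : ∀ k : m → ℝ, M.mulVec k = 0 →
      (∑ i, f i * k i)^2 ≤ β * (∑ i, k i * k i) * (∑ i, f i * f i)) :
    ∃ (μ : ℝ) (g : m → ℝ), 0 < μ ∧ g ≠ 0 ∧ M.mulVec g = μ • g ∧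
      μ * ((1 - β) * ∑ i, f i * f i) ≤ ∑ i, f i * (M.mulVec f) i := by
  classical
  have hM : M.IsHermitian := hpsd.1
  set b : m → m → ℝ := fun j => (hM.eigenvectorBasis j : EuclideanSpace ℝ m) with hb
  set μ : m → ℝ := hM.eigenvalues with hμ
  have h_eig : ∀ j, M.mulVec (b j) = μ j • (b j) := fun j => hM.mulVec_eigenvectorBasis j
  have h_ortho : ∀ j k, (∑ i, b j i * b k i) = if j = k then (1:ℝ) else 0 := by
    intro j k
    have := hM.eigenvectorBasis.orthonormal
    rw [orthonormal_iff_ite] at this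
    have h2 := this j k
    rw [PiLp.inner_apply] at h2
    have h3 : ∑ x, (hM.eigenvectorBasis k).ofLp x * (hM.eigenvectorBasis j).ofLp x = if j = k then (1:ℝ) else 0 := by
      simpa [RCLike.inner_apply] using h2
    rw [← h3]; exact Finset.sum_congr rfl fun i _ => mul_comm _ _
  have hμ0 : ∀ j, 0 ≤ μ j := hpsd.eigenvalues_nonneg
  set c : m → ℝ := fun j => ∑ i, f i * b j i with hc
  have h_expand : ∀ i, f i = ∑ j, c j * b j i := by
    intro i
    have h := hM.eigenvectorBasis.sum_repr (WithLp.toLp 2 f)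
    have h2 : (∑ j, hM.eigenvectorBasis.repr (WithLp.toLp 2 f) j • hM.eigenvectorBasis j) i = f i := by
      rw [h]
    rw [← h2, WithLp.ofLp_sum, Finset.sum_apply]
    refine Finset.sum_congr rfl fun j _ => ?_
    have hr : hM.eigenvectorBasis.repr (WithLp.toLp 2 f) j = c j := by
      rw [OrthonormalBasis.repr_apply_apply, PiLp.inner_apply]
      simp [RCLike.inner_apply, hc, mul_comm]
      rfl
    rw [hr]; rfl
  -- Parseval
  have hPar : (∑ i, f i * f i) = ∑ j, c j ^ 2 := by
    calc (∑ i, f i * f i) = ∑ i, f i * ∑ j, c j * b j i := by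
          refine Finset.sum_congr rfl fun i _ => ?_; rw [← h_expand i]
      _ = ∑ i, ∑ j, c j * (f i * b j i) := by
          refine Finset.sum_congr rfl fun i _ => ?_
          rw [Finset.mul_sum]; exact Finset.sum_congr rfl fun j _ => by ring
      _ = ∑ j, ∑ i, c j * (f i * b j i) := Finset.sum_comm
      _ = ∑ j, c j ^ 2 := by
          refine Finset.sum_congr rfl fun j _ => ?_
          rw [← Finset.mul_sum]; rw [show (∑ i, f i * b j i) = c j from rfl]; ring
  have hMb : ∀ j i, (∑ l, M i l * b j l) = μ j * b j i := by
    intro j i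
    have := congrFun (h_eig j) i
    simpa [Matrix.mulVec, dotProduct] using this
  have hMf : ∀ i, M.mulVec f i = ∑ j, c j * (μ j * b j i) := by
    intro i
    have : M.mulVec f i = ∑ l, M i l * f l := rfl
    rw [this]
    calc (∑ l, M i l * f l) = ∑ l, ∑ j, c j * (M i l * b j l) := by
          refine Finset.sum_congr rfl fun l _ => ?_
          rw [h_expand l, Finset.mul_sum]
          refine Finset.sum_congr rfl fun j _ => by ring
      _ = ∑ j, ∑ l, c j * (M i l * b j l) := Finset.sum_comm
      _ = ∑ j, c j * (μ j * b j i) := by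
          refine Finset.sum_congr rfl fun j _ => ?_
          rw [← Finset.mul_sum, hMb j i]
  have hfMf : (∑ i, f i * M.mulVec f i) = ∑ j, μ j * c j ^ 2 := by
    calc (∑ i, f i * M.mulVec f i) = ∑ i, ∑ j, (c j * μ j) * (f i * b j i) := by
          refine Finset.sum_congr rfl fun i _ => ?_
          rw [hMf i, Finset.mul_sum]
          refine Finset.sum_congr rfl fun j _ => by ring
      _ = ∑ j, ∑ i, (c j * μ j) * (f i * b j i) := Finset.sum_comm
      _ = ∑ j, μ j * c j ^ 2 := by
          refine Finset.sum_congr rfl fun j _ => ?_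
          rw [← Finset.mul_sum, show (∑ i, f i * b j i) = c j from rfl]; ring
  -- kernel part
  set Z : Finset m := Finset.univ.filter (fun j => μ j = 0) with hZ
  set k₀ : m → ℝ := fun i => ∑ j ∈ Z, c j * b j i with hk₀
  have hMk₀ : M.mulVec k₀ = 0 := by
    funext i
    have : M.mulVec k₀ i = ∑ l, M i l * k₀ l := rfl
    rw [this]
    have : (∑ l, M i l * k₀ l) = ∑ j ∈ Z, c j * (μ j * b j i) := by
      calc (∑ l, M i l * k₀ l) = ∑ l, ∑ j ∈ Z, c j * (M i l * b j l) := by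
            refine Finset.sum_congr rfl fun l _ => ?_
            rw [hk₀]; rw [Finset.mul_sum]
            refine Finset.sum_congr rfl fun j _ => by ring
        _ = ∑ j ∈ Z, ∑ l, c j * (M i l * b j l) := Finset.sum_comm
        _ = ∑ j ∈ Z, c j * (μ j * b j i) := by
            refine Finset.sum_congr rfl fun j _ => ?_
            rw [← Finset.mul_sum, hMb j i]
    rw [this]
    have hz : (∑ j ∈ Z, c j * (μ j * b j i)) = 0 := Finset.sum_eq_zero fun j hj => by
      rw [(Finset.mem_filter.1 hj).2]; ring
    rw [hz]; rfl
  have hfk₀ : (∑ i, f i * k₀ i) = ∑ j ∈ Z, c j ^ 2 := by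
    calc (∑ i, f i * k₀ i) = ∑ i, ∑ j ∈ Z, c j * (f i * b j i) := by
          refine Finset.sum_congr rfl fun i _ => ?_
          rw [hk₀, Finset.mul_sum]; exact Finset.sum_congr rfl fun j _ => by ring
      _ = ∑ j ∈ Z, ∑ i, c j * (f i * b j i) := Finset.sum_comm
      _ = ∑ j ∈ Z, c j ^ 2 := by
          refine Finset.sum_congr rfl fun j _ => ?_
          rw [← Finset.mul_sum, show (∑ i, f i * b j i) = c j from rfl]; ring
  have hkk : (∑ i, k₀ i * k₀ i) = ∑ j ∈ Z, c j ^ 2 := by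
    calc (∑ i, k₀ i * k₀ i)
        = ∑ i, ∑ j ∈ Z, ∑ j' ∈ Z, (c j * c j') * (b j i * b j' i) := by
          refine Finset.sum_congr rfl fun i _ => ?_
          rw [hk₀, Finset.sum_mul_sum]
          exact Finset.sum_congr rfl fun j _ => Finset.sum_congr rfl fun j' _ => by ring
      _ = ∑ j ∈ Z, ∑ j' ∈ Z, ∑ i, (c j * c j') * (b j i * b j' i) := by
          rw [Finset.sum_comm]
          exact Finset.sum_congr rfl fun j _ => Finset.sum_comm
      _ = ∑ j ∈ Z, ∑ j' ∈ Z, (c j * c j') * (if j = j' then (1:ℝ) else 0) := by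
          refine Finset.sum_congr rfl fun j _ => Finset.sum_congr rfl fun j' _ => ?_
          rw [← Finset.mul_sum, h_ortho j j']
      _ = ∑ j ∈ Z, c j ^ 2 := by
          refine Finset.sum_congr rfl fun j hj => ?_
          simp only [mul_ite, mul_one, mul_zero]
          rw [Finset.sum_ite_eq Z j (fun j' => c j * c j')]
          simp [hj]; ring
  -- the main estimates
  set K : ℝ := ∑ j ∈ Z, c j ^ 2 with hK
  set S : ℝ := ∑ j, c j ^ 2 with hS
  have hK0 : 0 ≤ K := Finset.sum_nonneg fun j _ => sq_nonneg _
  have hS0 : 0 < S := by rw [← hPar]; exact hf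
  have hKle : K ≤ β * S := by
    have h := hker k₀ hMk₀
    rw [hfk₀, hkk, hPar] at h
    rcases eq_or_lt_of_le hK0 with h0 | h0
    · rw [← h0]; positivity
    · nlinarith [h, h0]
  have hsplit : S = (∑ j ∈ Finset.univ.filter (fun j => ¬ μ j = 0), c j ^ 2) + K := by
    rw [hS, hK, hZ]
    rw [← Finset.sum_filter_add_sum_filter_not Finset.univ (fun j => ¬ μ j = 0)]
    simp only [not_not]
  set Sp : ℝ := ∑ j ∈ Finset.univ.filter (fun j => ¬ μ j = 0), c j ^ 2 with hSp
  have hSpge : (1 - β) * S ≤ Sp := by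
    have : Sp = S - K := by rw [hsplit]; ring
    rw [this]; nlinarith [hKle]
  have hSppos : 0 < Sp := lt_of_lt_of_le (by nlinarith) hSpge
  -- find an index with positive eigenvalue and nonzero coefficient
  set P' : Finset m := Finset.univ.filter (fun j => ¬ μ j = 0 ∧ ¬ c j = 0) with hP'
  have hP'ne : P'.Nonempty := by
    by_contra hne
    rw [Finset.not_nonempty_iff_eq_empty] at hne
    have : Sp = 0 := by
      refine Finset.sum_eq_zero fun j hj => ?_
      have hjμ : ¬ μ j = 0 := (Finset.mem_filter.1 hj).2
      by_cases hc0 : c j = 0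
      · rw [hc0]; ring
      · exfalso
        have : j ∈ P' := by rw [hP']; exact Finset.mem_filter.2 ⟨Finset.mem_univ _, hjμ, hc0⟩
        rw [hne] at this; exact absurd this (Finset.notMem_empty j)
    rw [this] at hSppos; exact lt_irrefl 0 hSppos
  obtain ⟨j', hj'mem, hj'min⟩ := Finset.exists_min_image P' μ hP'ne
  have hj'p : 0 < μ j' := by
    rcases (Finset.mem_filter.1 hj'mem).2 with ⟨hne0, _⟩
    exact lt_of_le_of_ne (hμ0 j') (Ne.symm hne0)
  have hSpP' : Sp = ∑ j ∈ P', c j ^ 2 := by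
    rw [hSp, hP']
    rw [← Finset.sum_filter_add_sum_filter_not (Finset.univ.filter (fun j => ¬ μ j = 0))
      (fun j => ¬ c j = 0)]
    have : (∑ j ∈ (Finset.univ.filter (fun j => ¬ μ j = 0)).filter (fun j => ¬ ¬ c j = 0),
        c j ^ 2) = 0 := by
      refine Finset.sum_eq_zero fun j hj => ?_
      have := (Finset.mem_filter.1 hj).2
      rw [not_not] at this; rw [this]; ring
    rw [this, add_zero, Finset.filter_filter]
  have hlow : μ j' * Sp ≤ ∑ j, μ j * c j ^ 2 := by
    have h1 : (∑ j ∈ P', μ j' * c j ^ 2) ≤ ∑ j ∈ P', μ j * c j ^ 2 :=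
      Finset.sum_le_sum fun j hj => by
        have := hj'min j hj
        nlinarith [sq_nonneg (c j), this]
    have h2 : (∑ j ∈ P', μ j * c j ^ 2) ≤ ∑ j, μ j * c j ^ 2 := by
      refine Finset.sum_le_sum_of_subset_of_nonneg (Finset.filter_subset _ _) ?_
      intro j _ _
      have := hμ0 j; positivity
    calc μ j' * Sp = ∑ j ∈ P', μ j' * c j ^ 2 := by rw [hSpP', Finset.mul_sum]
      _ ≤ _ := le_trans h1 h2
  refine ⟨μ j', b j', hj'p, ?_, h_eig j', ?_⟩
  · intro hb0
    have := h_ortho j' j'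
    rw [if_pos rfl] at this
    rw [hb0] at this
    simp at this
  · rw [hfMf, hPar]
    calc μ j' * ((1 - β) * S) ≤ μ j' * Sp := by
          have := hj'p; nlinarith [hSpge]
      _ ≤ ∑ j, μ j * c j ^ 2 := hlow

lemma triSign_zero {T e : Finset ℕ} (h : ¬ (e ⊆ T ∧ e.card = 2 ∧ T.card = 3)) :
    triSign T e = 0 := by rw [triSign, if_neg h]

lemma card_triple {a b c : ℕ} (hab : a ≠ b) (hac : a ≠ c) (hbc : b ≠ c) :
    ({a, b, c} : Finset ℕ).card = 3 := by
  rw [Finset.card_insert_of_notMem (by simp [hab, hac]),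
    Finset.card_insert_of_notMem (by simp [hbc]), Finset.card_singleton]

lemma card_pair' {a b : ℕ} (hab : a ≠ b) : ({a, b} : Finset ℕ).card = 2 := by
  rw [Finset.card_insert_of_notMem (by simp [hab]), Finset.card_singleton]

lemma triSign_eval {a b c : ℕ} (hab : a < b) (hbc : b < c) :
    triSign {a,b,c} {a,b} = 1 ∧ triSign {a,b,c} {a,c} = -1 ∧ triSign {a,b,c} {b,c} = 1 := by
  have hab' : a ≠ b := Nat.ne_of_lt hab
  have hbc' : b ≠ c := Nat.ne_of_lt hbc
  have hac' : a ≠ c := Nat.ne_of_lt (lt_trans hab hbc)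
  have hcard3 : ({a,b,c} : Finset ℕ).card = 3 := card_triple hab' hac' hbc'
  have hmax : ({a,b,c} : Finset ℕ).max = ({c} : Finset ℕ).max := by
    simp only [Finset.max_insert, Finset.max_singleton]
    rw [sup_eq_right.mpr (WithBot.coe_le_coe.2 (le_of_lt hbc)),
      sup_eq_right.mpr (WithBot.coe_le_coe.2 (le_of_lt (lt_trans hab hbc)))]
  have hmin : ({a,b,c} : Finset ℕ).min = ({a} : Finset ℕ).min := by
    simp only [Finset.min_insert, Finset.min_singleton]
    rw [inf_eq_left.mpr (WithTop.coe_le_coe.2 (le_of_lt hbc)),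
      inf_eq_left.mpr (WithTop.coe_le_coe.2 (le_of_lt hab))]
  have hd1 : ({a,b,c} : Finset ℕ) \ {a,b} = {c} := by
    ext x
    simp only [Finset.mem_sdiff, Finset.mem_insert, Finset.mem_singleton]
    constructor
    · rintro ⟨h1 | h1 | h1, h2⟩ <;> omega
    · intro h; subst h; exact ⟨by tauto, by omega⟩
  have hd2 : ({a,b,c} : Finset ℕ) \ {a,c} = {b} := by
    ext x
    simp only [Finset.mem_sdiff, Finset.mem_insert, Finset.mem_singleton]
    constructor
    · rintro ⟨h1 | h1 | h1, h2⟩ <;> omega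
    · intro h; subst h; exact ⟨by tauto, by omega⟩
  have hd3 : ({a,b,c} : Finset ℕ) \ {b,c} = {a} := by
    ext x
    simp only [Finset.mem_sdiff, Finset.mem_insert, Finset.mem_singleton]
    constructor
    · rintro ⟨h1 | h1 | h1, h2⟩ <;> omega
    · intro h; subst h; exact ⟨by tauto, by omega⟩
  have hc1 : (({a,b,c} : Finset ℕ) \ {a,b}).max = ({a,b,c} : Finset ℕ).max ∨
      (({a,b,c} : Finset ℕ) \ {a,b}).min = ({a,b,c} : Finset ℕ).min := by
    left; rw [hd1, hmax]
  have hc3 : (({a,b,c} : Finset ℕ) \ {b,c}).max = ({a,b,c} : Finset ℕ).max ∨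
      (({a,b,c} : Finset ℕ) \ {b,c}).min = ({a,b,c} : Finset ℕ).min := by
    right; rw [hd3, hmin]
  have hc2 : ¬((({a,b,c} : Finset ℕ) \ {a,c}).max = ({a,b,c} : Finset ℕ).max ∨
      (({a,b,c} : Finset ℕ) \ {a,c}).min = ({a,b,c} : Finset ℕ).min) := by
    rw [hd2, hmax, hmin]
    push_neg
    constructor
    · intro h; rw [Finset.max_singleton, Finset.max_singleton] at h
      exact hbc' (by exact_mod_cast h)
    · intro h; rw [Finset.min_singleton, Finset.min_singleton] at h
      exact hab'.symm (by exact_mod_cast h)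
  refine ⟨?_, ?_, ?_⟩
  · rw [triSign, if_pos ⟨by intro x hx; simp at hx ⊢; tauto, card_pair' hab', hcard3⟩,
      if_pos hc1]
  · rw [triSign, if_pos ⟨by intro x hx; simp at hx ⊢; tauto, card_pair' hac', hcard3⟩,
      if_neg hc2]
  · rw [triSign, if_pos ⟨by intro x hx; simp at hx ⊢; tauto, card_pair' hbc', hcard3⟩,
      if_pos hc3]

/-- the sign `σ_x(y)` -/
noncomputable def sgn (x y : ℕ) : ℝ := if y < x then 1 else -1

lemma sgn_lt {x y : ℕ} (h : y < x) : sgn x y = 1 := if_pos h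
lemma sgn_gt {x y : ℕ} (h : x < y) : sgn x y = -1 := if_neg (by omega)

lemma sign_prod {x a b : ℕ} (hxa : x ≠ a) (hxb : x ≠ b) (hab : a ≠ b) :
    (triSign {x,a,b} {x,a} * sgn x a) * (triSign {x,a,b} {x,a} * sgn x a) = 1 ∧
    (triSign {x,a,b} {x,a} * sgn x a) * (triSign {x,a,b} {x,b} * sgn x b) = -1 ∧
    (triSign {x,a,b} {x,b} * sgn x b) * (triSign {x,a,b} {x,b} * sgn x b) = 1 := by
  rcases Nat.lt_trichotomy x a with h1|h1|h1
  · rcases Nat.lt_trichotomy a b with h2|h2|h2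
    · -- x < a < b
      obtain ⟨e1, e2, _⟩ := triSign_eval h1 h2
      rw [e1, e2, sgn_gt h1, sgn_gt (lt_trans h1 h2)]; norm_num
    · exact absurd h2 hab
    · rcases Nat.lt_trichotomy x b with h3|h3|h3
      · -- x < b < a
        have hT : ({x,a,b} : Finset ℕ) = {x,b,a} := by ext t; simp; tauto
        rw [hT]
        obtain ⟨e1, e2, _⟩ := triSign_eval h3 h2
        rw [e1, e2, sgn_gt h1, sgn_gt h3]; norm_num
      · exact absurd h3 hxb
      · -- b < x < a
        have hT : ({x,a,b} : Finset ℕ) = {b,x,a} := by ext t; simp; tauto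
        rw [hT, show ({x,b} : Finset ℕ) = {b,x} from Finset.pair_comm x b]
        obtain ⟨e1, _, e3⟩ := triSign_eval h3 h1
        rw [e1, e3, sgn_gt h1, sgn_lt h3]; norm_num
  · exact absurd h1 hxa
  · rcases Nat.lt_trichotomy x b with h3|h3|h3
    · -- a < x < b
      have hT : ({x,a,b} : Finset ℕ) = {a,x,b} := by ext t; simp; tauto
      rw [hT, show ({x,a} : Finset ℕ) = {a,x} from Finset.pair_comm x a]
      obtain ⟨e1, _, e3⟩ := triSign_eval h1 h3
      rw [e1, e3, sgn_lt h1, sgn_gt h3]; norm_num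
    · exact absurd h3 hxb
    · rcases Nat.lt_trichotomy a b with h2|h2|h2
      · -- a < b < x
        have hT : ({x,a,b} : Finset ℕ) = {a,b,x} := by ext t; simp; tauto
        rw [hT, show ({x,a} : Finset ℕ) = {a,x} from Finset.pair_comm x a,
          show ({x,b} : Finset ℕ) = {b,x} from Finset.pair_comm x b]
        obtain ⟨_, e2, e3⟩ := triSign_eval h2 h3
        rw [e2, e3, sgn_lt h1, sgn_lt h3]; norm_num
      · exact absurd h2 hab
      · -- b < a < x
        have hT : ({x,a,b} : Finset ℕ) = {b,a,x} := by ext t; simp; tauto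
        rw [hT, show ({x,a} : Finset ℕ) = {a,x} from Finset.pair_comm x a,
          show ({x,b} : Finset ℕ) = {b,x} from Finset.pair_comm x b]
        obtain ⟨_, e2, e3⟩ := triSign_eval h2 h1
        rw [e2, e3, sgn_lt h1, sgn_lt h3]; norm_num

lemma pc2_triple {x a b : ℕ} (hxa : x ≠ a) (hxb : x ≠ b) (hab : a ≠ b) :
    ({x,a,b} : Finset ℕ).powersetCard 2 =
      ({({x,a} : Finset ℕ), {x,b}, {a,b}} : Finset (Finset ℕ)) := by
  ext e
  simp only [Finset.mem_powersetCard, Finset.mem_insert, Finset.mem_singleton]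
  constructor
  · rintro ⟨hsub, hcard⟩
    obtain ⟨u, v, huv, rfl⟩ := Finset.card_eq_two.1 hcard
    have hu : u ∈ ({x,a,b} : Finset ℕ) := hsub (by simp)
    have hv : v ∈ ({x,a,b} : Finset ℕ) := hsub (by simp)
    simp only [Finset.mem_insert, Finset.mem_singleton] at hu hv
    rcases hu with rfl|rfl|rfl <;> rcases hv with rfl|rfl|rfl <;>
      first
        | exact absurd rfl huv
        | simp [Finset.pair_comm]
  · intro h
    rcases h with rfl|rfl|rfl
    · exact ⟨by intro y hy; simp at hy ⊢; tauto, card_pair' hxa⟩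
    · exact ⟨by intro y hy; simp at hy ⊢; tauto, card_pair' hxb⟩
    · exact ⟨by intro y hy; simp at hy ⊢; tauto, card_pair' hab⟩

end auxspec

noncomputable section moreaux
open scoped Classical
open Finset Matrix

/-- link adjacency at `x` -/
def adjF (F : Finset (Finset ℕ)) (x y z : ℕ) : Prop := y ≠ z ∧ ({x,y,z} : Finset ℕ) ∈ F

def FxF (F : Finset (Finset ℕ)) (x : ℕ) : Finset (Finset ℕ) := F.filter (fun T => x ∈ T)

def dgrF (F : Finset (Finset ℕ)) (x y : ℕ) : ℝ :=
  ∑ z ∈ nbrs F x, if adjF F x y z then (1:ℝ) else 0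

def dpol (a b : ℕ → ℝ) (e : Finset ℕ) : ℝ :=
  2 * (∑ y ∈ e, a y * b y) - (∑ y ∈ e, a y) * (∑ y ∈ e, b y)

lemma dpol_pair (a b : ℕ → ℝ) {u v : ℕ} (huv : u ≠ v) :
    dpol a b {u,v} = (a u - a v) * (b u - b v) := by
  rw [dpol, Finset.sum_insert (by simp [huv]), Finset.sum_insert (by simp [huv]),
    Finset.sum_insert (by simp [huv]), Finset.sum_singleton, Finset.sum_singleton,
    Finset.sum_singleton]
  ring

lemma card3_distinct {x y z : ℕ} (h : ({x,y,z} : Finset ℕ).card = 3) :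
    x ≠ y ∧ x ≠ z ∧ y ≠ z := by
  refine ⟨?_, ?_, ?_⟩ <;> rintro rfl
  · have h2 : ({x,x,z} : Finset ℕ) = {x,z} := by rw [Finset.insert_idem]
    rw [h2] at h
    have hle : ({x,z} : Finset ℕ).card ≤ 2 :=
      le_trans (Finset.card_insert_le _ _) (by simp)
    omega
  · have h2 : ({x,y,x} : Finset ℕ) = {x,y} := by
      ext t; simp only [Finset.mem_insert, Finset.mem_singleton]; tauto
    rw [h2] at h
    have hle : ({x,y} : Finset ℕ).card ≤ 2 :=
      le_trans (Finset.card_insert_le _ _) (by simp)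
    omega
  · have h2 : ({x,y,y} : Finset ℕ) = {x,y} := by
      ext t; simp only [Finset.mem_insert, Finset.mem_singleton]; tauto
    rw [h2] at h
    have hle : ({x,y} : Finset ℕ).card ≤ 2 :=
      le_trans (Finset.card_insert_le _ _) (by simp)
    omega

lemma eq_triple {x y z : ℕ} {T : Finset ℕ} (hT : T.card = 3)
    (hx : x ∈ T) (hy : y ∈ T) (hz : z ∈ T)
    (hxy : x ≠ y) (hxz : x ≠ z) (hyz : y ≠ z) : T = {x,y,z} := by
  refine (Finset.eq_of_subset_of_card_le ?_ ?_).symm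
  · intro t ht; simp at ht; rcases ht with rfl|rfl|rfl <;> assumption
  · rw [hT, card_triple hxy hxz hyz]

variable {F : Finset (Finset ℕ)} {x : ℕ}

lemma adjF_symm {y z : ℕ} (h : adjF F x y z) : adjF F x z y := by
  refine ⟨h.1.symm, ?_⟩
  have : ({x,z,y} : Finset ℕ) = {x,y,z} := by ext t; simp only [Finset.mem_insert, Finset.mem_singleton]; tauto
  rw [this]; exact h.2

lemma adjF_mem (hF : IsTriFam F) {y z : ℕ} (h : adjF F x y z) :
    y ∈ nbrs F x ∧ x ≠ y ∧ x ≠ z := by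
  obtain ⟨hyz, hT⟩ := h
  have hcard := hF.2 _ hT
  obtain ⟨hxy, hxz, _⟩ := card3_distinct hcard
  refine ⟨?_, hxy, hxz⟩
  rw [nbrs, Finset.mem_filter]
  refine ⟨?_, hxy, ⟨{x,y,z}, hT, by simp, by simp⟩⟩
  rw [vertsOf, Finset.mem_biUnion]
  exact ⟨{x,y,z}, hT, by simp⟩

lemma mem_FxF_iff {T : Finset ℕ} : T ∈ FxF F x ↔ T ∈ F ∧ x ∈ T := Finset.mem_filter

/-- structure of a triangle at `x` -/
lemma FxF_struct (hF : IsTriFam F) {T : Finset ℕ} (hT : T ∈ FxF F x) :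
    ∃ a b : ℕ, a ≠ b ∧ T.erase x = {a,b} ∧ T = {x,a,b} ∧ adjF F x a b ∧
      x ≠ a ∧ x ≠ b ∧ a ∈ nbrs F x ∧ b ∈ nbrs F x := by
  obtain ⟨hTF, hxT⟩ := mem_FxF_iff.1 hT
  have hcard := hF.2 _ hTF
  have hce : (T.erase x).card = 2 := by rw [Finset.card_erase_of_mem hxT, hcard]
  obtain ⟨a, b, hab, he⟩ := Finset.card_eq_two.1 hce
  have hxa : x ≠ a := by
    intro h; subst h
    exact (Finset.notMem_erase x T) (he ▸ (by simp : x ∈ ({x,b} : Finset ℕ)))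
  have hxb : x ≠ b := by
    intro h; subst h
    exact (Finset.notMem_erase x T) (he ▸ (by simp : x ∈ ({a,x} : Finset ℕ)))
  have hTeq : T = {x,a,b} := by
    have := Finset.insert_erase hxT
    rw [he] at this
    exact this.symm
  have hadj : adjF F x a b := ⟨hab, hTeq ▸ hTF⟩
  obtain ⟨haN, _, _⟩ := adjF_mem hF hadj
  obtain ⟨hbN, _, _⟩ := adjF_mem hF (adjF_symm hadj)
  exact ⟨a, b, hab, he, hTeq, hadj, hxa, hxb, haN, hbN⟩

lemma adjF_tri (hF : IsTriFam F) {a b : ℕ} (h : adjF F x a b) :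
    ({x,a,b} : Finset ℕ) ∈ FxF F x ∧ (({x,a,b} : Finset ℕ)).erase x = {a,b} := by
  obtain ⟨_, hxa, hxb⟩ := adjF_mem hF h
  constructor
  · exact mem_FxF_iff.2 ⟨h.2, by simp⟩
  · rw [Finset.erase_insert (by simp only [Finset.mem_insert, Finset.mem_singleton]; push_neg; exact ⟨hxa, hxb⟩)]

/-- The fundamental double counting lemma: sums over adjacent ordered pairs
equal sums over triangles at `x` of ordered pairs from the opposite edge. -/
lemma glue (hF : IsTriFam F) (W : ℕ → ℕ → ℝ) :
    ∑ y ∈ nbrs F x, ∑ z ∈ nbrs F x, (if adjF F x y z then W y z else 0)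
      = ∑ T ∈ FxF F x, ∑ y ∈ T.erase x, ∑ z ∈ (T.erase x).erase y, W y z := by
  classical
  have lhs1 : (∑ y ∈ nbrs F x, ∑ z ∈ nbrs F x, (if adjF F x y z then W y z else 0))
      = ∑ p ∈ ((nbrs F x) ×ˢ (nbrs F x)).filter (fun p => adjF F x p.1 p.2), W p.1 p.2 := by
    rw [Finset.sum_filter, Finset.sum_product]
  have rhs1 : (∑ T ∈ FxF F x, ∑ y ∈ T.erase x, ∑ z ∈ (T.erase x).erase y, W y z)
      = ∑ q ∈ (FxF F x).sigma (fun T => (T.erase x).sigma (fun y => (T.erase x).erase y)),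
          W q.2.1 q.2.2 := by
    rw [Finset.sum_sigma]
    refine Finset.sum_congr rfl fun T _ => ?_
    rw [Finset.sum_sigma]
  rw [lhs1, rhs1]
  refine Finset.sum_nbij' (fun p => ⟨{x, p.1, p.2}, p.1, p.2⟩) (fun q => (q.2.1, q.2.2))
    ?_ ?_ ?_ ?_ ?_
  · rintro ⟨y, z⟩ hp
    rw [Finset.mem_filter, Finset.mem_product] at hp
    obtain ⟨⟨hy, hz⟩, hadj⟩ := hp
    obtain ⟨hTmem, herase⟩ := adjF_tri hF hadj
    exact Finset.mem_sigma.2 ⟨hTmem, Finset.mem_sigma.2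
      ⟨by rw [herase]; simp, by rw [herase]; simp [Ne.symm hadj.1]⟩⟩
  · rintro ⟨T, y, z⟩ hq
    obtain ⟨hT, hq2⟩ := Finset.mem_sigma.1 hq
    obtain ⟨hy, hz⟩ := Finset.mem_sigma.1 hq2
    rw [Finset.mem_filter, Finset.mem_product]
    have hzy : z ≠ y := Finset.ne_of_mem_erase hz
    have hz' : z ∈ T.erase x := Finset.mem_of_mem_erase hz
    have hyx : y ≠ x := Finset.ne_of_mem_erase hy
    have hzx : z ≠ x := Finset.ne_of_mem_erase hz'
    have hyT : y ∈ T := Finset.mem_of_mem_erase hy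
    have hzT : z ∈ T := Finset.mem_of_mem_erase hz'
    obtain ⟨hTF, hxT⟩ := mem_FxF_iff.1 hT
    have hTeq : T = {x, y, z} := eq_triple (hF.2 _ hTF) hxT hyT hzT
      (Ne.symm hyx) (Ne.symm hzx) (Ne.symm hzy)
    have hadj : adjF F x y z := ⟨Ne.symm hzy, hTeq ▸ hTF⟩
    obtain ⟨hyN, _, _⟩ := adjF_mem hF hadj
    obtain ⟨hzN, _, _⟩ := adjF_mem hF (adjF_symm hadj)
    exact ⟨⟨hyN, hzN⟩, hadj⟩
  · rintro ⟨y, z⟩ _; rfl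
  · rintro ⟨T, y, z⟩ hq
    obtain ⟨hT, hq2⟩ := Finset.mem_sigma.1 hq
    obtain ⟨hy, hz⟩ := Finset.mem_sigma.1 hq2
    have hzy : z ≠ y := Finset.ne_of_mem_erase hz
    have hz' : z ∈ T.erase x := Finset.mem_of_mem_erase hz
    have hyx : y ≠ x := Finset.ne_of_mem_erase hy
    have hzx : z ≠ x := Finset.ne_of_mem_erase hz'
    have hyT : y ∈ T := Finset.mem_of_mem_erase hy
    have hzT : z ∈ T := Finset.mem_of_mem_erase hz'
    obtain ⟨hTF, hxT⟩ := mem_FxF_iff.1 hT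
    have hTeq : T = {x, y, z} := eq_triple (hF.2 _ hTF) hxT hyT hzT
      (Ne.symm hyx) (Ne.symm hzx) (Ne.symm hzy)
    exact congrArg (fun s => (⟨s, y, z⟩ : (_ : Finset ℕ) × (_ : ℕ) × ℕ)) hTeq.symm
  · rintro ⟨y, z⟩ _; rfl

end moreaux

noncomputable section moreaux2
open scoped Classical
open Finset Matrix

variable (F : Finset (Finset ℕ)) (x : ℕ)

/-- the link Laplacian at `x` -/
def LxM : Matrix {y // y ∈ nbrs F x} {y // y ∈ nbrs F x} ℝ :=
  Matrix.of fun y z => (if y.1 = z.1 then dgrF F x y.1 else 0) -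
    (if adjF F x y.1 z.1 then 1 else 0)

variable {F x}

lemma pair_erase_left {u v : ℕ} (h : u ≠ v) : ({u,v} : Finset ℕ).erase u = {v} :=
  Finset.erase_insert (by simp [h])

lemma pair_erase_right {u v : ℕ} (h : u ≠ v) : ({u,v} : Finset ℕ).erase v = {u} := by
  rw [Finset.pair_comm]; exact Finset.erase_insert (by simp [Ne.symm h])

lemma pair_double_sum (H K : ℕ → ℝ) {u v : ℕ} (h : u ≠ v) :
    (∑ y ∈ ({u,v} : Finset ℕ), ∑ z ∈ (({u,v} : Finset ℕ)).erase y,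
      (H y * K y - H y * K z)) = dpol H K {u,v} := by
  rw [Finset.sum_insert (by simp [h]), Finset.sum_singleton,
    pair_erase_left h, pair_erase_right h, Finset.sum_singleton, Finset.sum_singleton,
    dpol_pair _ _ h]
  ring

/-- bilinear form identity for the link Laplacian -/
lemma QF2 (hF : IsTriFam F) (H K : ℕ → ℝ) :
    (∑ y : {y // y ∈ nbrs F x}, H y.1 *
      ((LxM F x).mulVec (fun z => K z.1)) y)
    = ∑ T ∈ FxF F x, dpol H K (T.erase x) := by
  have step1 : ∀ y : {y // y ∈ nbrs F x},
      ((LxM F x).mulVec (fun z => K z.1)) y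
        = ∑ z ∈ nbrs F x, ((if y.1 = z then dgrF F x y.1 else 0) -
            (if adjF F x y.1 z then 1 else 0)) * K z := by
    intro y
    show (∑ z : {y // y ∈ nbrs F x}, LxM F x y z * K z.1) = _
    rw [← Finset.sum_coe_sort (nbrs F x)
      (fun z => ((if y.1 = z then dgrF F x y.1 else 0) -
        (if adjF F x y.1 z then 1 else 0)) * K z)]
    rfl
  calc (∑ y : {y // y ∈ nbrs F x}, H y.1 * ((LxM F x).mulVec (fun z => K z.1)) y)
      = ∑ y ∈ nbrs F x, H y * (∑ z ∈ nbrs F x,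
          ((if y = z then dgrF F x y else 0) - (if adjF F x y z then 1 else 0)) * K z) := by
        rw [← Finset.sum_coe_sort (nbrs F x) (fun y => H y * (∑ z ∈ nbrs F x,
          ((if y = z then dgrF F x y else 0) - (if adjF F x y z then 1 else 0)) * K z))]
        exact Finset.sum_congr rfl fun y _ => by rw [step1 y]
    _ = ∑ y ∈ nbrs F x, (∑ z ∈ nbrs F x,
          (if y = z then dgrF F x y * (H y * K z) else 0))
        - ∑ y ∈ nbrs F x, (∑ z ∈ nbrs F x, (if adjF F x y z then H y * K z else 0)) := by
        rw [← Finset.sum_sub_distrib]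
        refine Finset.sum_congr rfl fun y _ => ?_
        rw [Finset.mul_sum, ← Finset.sum_sub_distrib]
        refine Finset.sum_congr rfl fun z _ => ?_
        split_ifs <;> ring
    _ = ∑ y ∈ nbrs F x, (∑ z ∈ nbrs F x, (if adjF F x y z then H y * K y else 0))
        - ∑ y ∈ nbrs F x, (∑ z ∈ nbrs F x, (if adjF F x y z then H y * K z else 0)) := by
        congr 1
        refine Finset.sum_congr rfl fun y hy => ?_
        have l1 : (∑ z ∈ nbrs F x, (if y = z then dgrF F x y * (H y * K z) else 0))
            = dgrF F x y * (H y * K y) := by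
          have := Finset.sum_ite_eq (nbrs F x) y (fun z => dgrF F x y * (H y * K z))
          rw [this, if_pos hy]
        rw [l1, dgrF, Finset.sum_mul]
        refine Finset.sum_congr rfl fun z _ => ?_
        split_ifs <;> ring
    _ = ∑ y ∈ nbrs F x, (∑ z ∈ nbrs F x,
          (if adjF F x y z then H y * K y - H y * K z else 0)) := by
        rw [← Finset.sum_sub_distrib]
        refine Finset.sum_congr rfl fun y _ => ?_
        rw [← Finset.sum_sub_distrib]
        refine Finset.sum_congr rfl fun z _ => ?_
        split_ifs <;> ring
    _ = ∑ T ∈ FxF F x, ∑ y ∈ T.erase x, ∑ z ∈ (T.erase x).erase y,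
          (H y * K y - H y * K z) := glue hF _
    _ = ∑ T ∈ FxF F x, dpol H K (T.erase x) := by
        refine Finset.sum_congr rfl fun T hT => ?_
        obtain ⟨a, b, hab, he, -, -, -, -, -, -⟩ := FxF_struct hF hT
        rw [he, pair_double_sum H K hab]

lemma LxM_herm : (LxM F x).IsHermitian := by
  rw [Matrix.IsHermitian.ext_iff]
  intro i j
  show LxM F x j i = LxM F x i j
  unfold LxM
  by_cases h : i.1 = j.1
  · rw [Matrix.of_apply, Matrix.of_apply, h]
  · have h' : ¬ (j.1 = i.1) := fun hh => h hh.symm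
    rw [Matrix.of_apply, Matrix.of_apply, if_neg h', if_neg h]
    congr 1
    by_cases ha : adjF F x i.1 j.1
    · rw [if_pos ha, if_pos (adjF_symm ha)]
    · rw [if_neg ha, if_neg (fun hs => ha (adjF_symm hs))]

lemma LxM_psd (hF : IsTriFam F) : (LxM F x).PosSemidef := by
  refine Matrix.PosSemidef.of_dotProduct_mulVec_nonneg ?_ ?_
  · exact LxM_herm
  · intro v
    have hsv : star v = v := rfl
    rw [hsv]
    set H : ℕ → ℝ := fun y => if hy : y ∈ nbrs F x then v ⟨y, hy⟩ else 0 with hH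
    have hve : (fun z : {y // y ∈ nbrs F x} => H z.1) = v := by
      funext z; rw [hH]; simp only [dif_pos z.2]
    have hdot : dotProduct v ((LxM F x).mulVec v)
        = ∑ y : {y // y ∈ nbrs F x}, H y.1 * ((LxM F x).mulVec (fun z => H z.1)) y := by
      rw [hve]
      refine Finset.sum_congr rfl fun y _ => ?_
      rw [hH]; simp only [dif_pos y.2]
    rw [hdot, QF2 hF H H]
    refine Finset.sum_nonneg fun T hT => ?_
    obtain ⟨a, b, hab, he, -, -, -, -, -, -⟩ := FxF_struct hF hT
    rw [he, dpol_pair _ _ hab]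
    exact mul_self_nonneg _

end moreaux2

noncomputable section moreaux3
open scoped Classical
open Finset Matrix

variable {F : Finset (Finset ℕ)} {x : ℕ}

/-- Stage 2: from a link edge at `u`, produce an eigenpair of the link Laplacian
whose eigenvalue is at most `m·d/(m-1)`. -/
lemma stage2 (hF : IsTriFam F) {u z0 : ℕ} (hadj : adjF F x u z0) :
    ∃ (μ : ℝ) (g : {y // y ∈ nbrs F x} → ℝ) (mC : ℕ),
      0 < μ ∧ g ≠ 0 ∧ (LxM F x).mulVec g = μ • g ∧
      2 ≤ mC ∧ dgrF F x u ≤ (mC : ℝ) - 1 ∧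
      μ * ((mC : ℝ) * ((mC : ℝ) - 1)) ≤ dgrF F x u * (mC : ℝ)^2 := by
  classical
  obtain ⟨huN, hxu, hxz0⟩ := adjF_mem hF hadj
  obtain ⟨hz0N, -, -⟩ := adjF_mem hF (adjF_symm hadj)
  set rel := Relation.ReflTransGen (adjF F x) with hrel
  set C : Finset ℕ := (nbrs F x).filter (fun z => rel u z) with hC
  have hCsub : C ⊆ nbrs F x := Finset.filter_subset _ _
  have huC : u ∈ C := Finset.mem_filter.2 ⟨huN, Relation.ReflTransGen.refl⟩
  have hclosed : ∀ y ∈ C, ∀ z, adjF F x y z → z ∈ C := by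
    intro y hy z hyz
    obtain ⟨-, hry⟩ := Finset.mem_filter.1 hy
    have hzN : z ∈ nbrs F x := (adjF_mem hF (adjF_symm hyz)).1
    exact Finset.mem_filter.2 ⟨hzN, hry.tail hyz⟩
  have hz0C : z0 ∈ C := hclosed u huC z0 hadj
  set m : ℕ := C.card with hm
  have hm2 : 2 ≤ m := Finset.one_lt_card.2 ⟨u, huC, z0, hz0C, hadj.1⟩
  set mR : ℝ := (m : ℝ) with hmR
  have hmR2 : (2:ℝ) ≤ mR := by rw [hmR]; exact_mod_cast hm2
  have hmcast : ((m - 1 : ℕ) : ℝ) = mR - 1 := by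
    rw [Nat.cast_sub (by omega)]; norm_num; rfl
  set WH : ℕ → ℝ := fun y => if y ∈ C then (if y = u then mR - 1 else -1) else 0 with hWH
  set w : {y // y ∈ nbrs F x} → ℝ := fun y => WH y.1 with hw
  -- sum of WH over C is zero
  have hsumWH : (∑ y ∈ C, WH y) = 0 := by
    rw [← Finset.add_sum_erase C WH huC]
    have h1 : WH u = mR - 1 := by rw [hWH]; simp [huC]
    have h2 : (∑ y ∈ C.erase u, WH y) = - ((m:ℝ) - 1) := by
      have : ∀ y ∈ C.erase u, WH y = -1 := by
        intro y hy
        rw [hWH]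
        simp only [Finset.mem_of_mem_erase hy, if_true, Finset.ne_of_mem_erase hy, if_false]
      rw [Finset.sum_congr rfl this, Finset.sum_const, Finset.card_erase_of_mem huC]
      rw [nsmul_eq_mul, hmcast]; ring
    rw [h1, h2]; ring
  -- norm of w
  have hnorm : (∑ y : {y // y ∈ nbrs F x}, w y * w y) = mR * (mR - 1) := by
    rw [hw]
    rw [Finset.sum_coe_sort (nbrs F x) (fun y => WH y * WH y)]
    rw [← Finset.sum_subset hCsub (by intro y _ hyc; rw [hWH]; simp [hyc])]
    rw [← Finset.add_sum_erase C _ huC]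
    have h1 : WH u = mR - 1 := by rw [hWH]; simp [huC]
    have h2 : (∑ y ∈ C.erase u, WH y * WH y) = (m:ℝ) - 1 := by
      have : ∀ y ∈ C.erase u, WH y * WH y = 1 := by
        intro y hy
        rw [hWH]
        simp only [Finset.mem_of_mem_erase hy, if_true, Finset.ne_of_mem_erase hy, if_false]
        ring
      rw [Finset.sum_congr rfl this, Finset.sum_const, Finset.card_erase_of_mem huC]
      rw [nsmul_eq_mul, hmcast]; ring
    rw [h1, h2]; ring
  -- degree of u as a card, and bound
  have hdeg_func : dgrF F x u = (((nbrs F x).filter (fun z => adjF F x u z)).card : ℝ) := by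
    rw [dgrF, Finset.sum_boole]
  have hdegC : ((nbrs F x).filter (fun z => adjF F x u z)) ⊆ C.erase u := by
    intro z hz
    obtain ⟨hzN, hza⟩ := Finset.mem_filter.1 hz
    exact Finset.mem_erase.2 ⟨Ne.symm hza.1, hclosed u huC z hza⟩
  have hdeg_le : dgrF F x u ≤ mR - 1 := by
    rw [hdeg_func, ← hmcast]
    have := Finset.card_le_card hdegC
    rw [Finset.card_erase_of_mem huC] at this
    exact_mod_cast this
  -- numerator: QF of w equals dgr(u) * m^2
  have hnum : (∑ y : {y // y ∈ nbrs F x}, w y * ((LxM F x).mulVec w) y)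
      = dgrF F x u * mR^2 := by
    have hwe : w = (fun z : {y // y ∈ nbrs F x} => WH z.1) := rfl
    rw [hwe]
    rw [QF2 hF WH WH]
    have hterm : ∀ T ∈ FxF F x, dpol WH WH (T.erase x)
        = (if u ∈ T.erase x then (1:ℝ) else 0) * mR^2 := by
      intro T hT
      obtain ⟨a, b, hab, he, -, hadj', -, -, -, -⟩ := FxF_struct hF hT
      rw [he, dpol_pair _ _ hab]
      by_cases hau : a = u
      · subst hau
        have hbC : b ∈ C := hclosed a huC b hadj'
        have h1 : WH a = mR - 1 := by rw [hWH]; simp [huC]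
        have h2 : WH b = -1 := by rw [hWH]; simp [hbC, hab.symm]
        rw [h1, h2]
        simp only [Finset.mem_insert, Finset.mem_singleton, true_or, if_true]
        ring
      · by_cases hbu : b = u
        · subst hbu
          have haC : a ∈ C := hclosed b huC a (adjF_symm hadj')
          have h1 : WH b = mR - 1 := by rw [hWH]; simp [huC]
          have h2 : WH a = -1 := by rw [hWH]; simp [haC, hab]
          rw [h1, h2]
          simp only [Finset.mem_insert, Finset.mem_singleton, or_true, if_true]
          ring
        · have hnem : u ∉ ({a, b} : Finset ℕ) := by
            simp only [Finset.mem_insert, Finset.mem_singleton]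
            push_neg
            exact ⟨fun h => hau h.symm, fun h => hbu h.symm⟩
          rw [if_neg hnem]
          by_cases haC : a ∈ C
          · have hbC : b ∈ C := hclosed a haC b hadj'
            have h1 : WH a = -1 := by rw [hWH]; simp [haC, hau]
            have h2 : WH b = -1 := by rw [hWH]; simp [hbC, hbu]
            rw [h1, h2]; ring
          · have hbC : b ∉ C := by
              intro hbC
              exact haC (hclosed b hbC a (adjF_symm hadj'))
            have h1 : WH a = 0 := by rw [hWH]; simp [haC]
            have h2 : WH b = 0 := by rw [hWH]; simp [hbC]
            rw [h1, h2]; ring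
    rw [Finset.sum_congr rfl hterm, ← Finset.sum_mul]
    have hcount : (∑ T ∈ FxF F x, (if u ∈ T.erase x then (1:ℝ) else 0)) = dgrF F x u := by
      have hg := glue (x := x) hF (fun y z => if y = u then (1:ℝ) else 0)
      have hl : (∑ y ∈ nbrs F x, ∑ z ∈ nbrs F x,
          (if adjF F x y z then (if y = u then (1:ℝ) else 0) else 0)) = dgrF F x u := by
        have : ∀ y ∈ nbrs F x, (∑ z ∈ nbrs F x,
            (if adjF F x y z then (if y = u then (1:ℝ) else 0) else 0))
            = if y = u then dgrF F x u else 0 := by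
          intro y _
          by_cases hyu : y = u
          · subst hyu
            simp only [eq_self_iff_true, if_true]
            rw [dgrF]
          · rw [if_neg hyu, if_neg hyu]
            refine Finset.sum_eq_zero fun z _ => ?_
            rw [ite_self]
        rw [Finset.sum_congr rfl this, Finset.sum_ite_eq' (nbrs F x) u
          (fun _ => dgrF F x u), if_pos huN]
      have hr : ∀ T ∈ FxF F x, (∑ y ∈ T.erase x, ∑ z ∈ (T.erase x).erase y,
          (if y = u then (1:ℝ) else 0)) = (if u ∈ T.erase x then (1:ℝ) else 0) := by
        intro T hT
        obtain ⟨a, b, hab, he, -, -, -, -, -, -⟩ := FxF_struct hF hT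
        rw [he, Finset.sum_insert (by simp [hab]), Finset.sum_singleton,
          pair_erase_left hab, pair_erase_right hab, Finset.sum_singleton,
          Finset.sum_singleton]
        by_cases hau : a = u
        · subst hau
          rw [if_pos rfl, if_neg (fun h => hab h.symm)]
          simp
        · by_cases hbu : b = u
          · subst hbu
            rw [if_pos rfl, if_neg hau]
            simp
          · rw [if_neg hau, if_neg hbu]
            have : u ∉ ({a,b} : Finset ℕ) := by
              simp only [Finset.mem_insert, Finset.mem_singleton]
              push_neg
              exact ⟨fun h => hau h.symm, fun h => hbu h.symm⟩
            rw [if_neg this]; ring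
      rw [hl, Finset.sum_congr rfl hr] at hg
      exact hg.symm
    rw [hcount]
  -- kernel orthogonality
  have hker : ∀ k : {y // y ∈ nbrs F x} → ℝ, (LxM F x).mulVec k = 0 →
      (∑ y : {y // y ∈ nbrs F x}, w y * k y) = 0 := by
    intro k hk
    set KH : ℕ → ℝ := fun y => if hy : y ∈ nbrs F x then k ⟨y, hy⟩ else 0 with hKH
    have hke : (fun z : {y // y ∈ nbrs F x} => KH z.1) = k := by
      funext z; rw [hKH]; simp only [dif_pos z.2]
    have hqf0 : (∑ T ∈ FxF F x, dpol KH KH (T.erase x)) = 0 := by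
      rw [← QF2 hF KH KH, hke, hk]
      simp
    have hnn : ∀ T ∈ FxF F x, 0 ≤ dpol KH KH (T.erase x) := by
      intro T hT
      obtain ⟨a, b, hab, he, -, -, -, -, -, -⟩ := FxF_struct hF hT
      rw [he, dpol_pair _ _ hab]
      exact mul_self_nonneg _
    have hterm0 := (Finset.sum_eq_zero_iff_of_nonneg hnn).1 hqf0
    have hadj_eq : ∀ y z : ℕ, adjF F x y z → KH y = KH z := by
      intro y z hyz
      obtain ⟨hTm, herase⟩ := adjF_tri hF hyz
      have h0 := hterm0 _ hTm
      rw [herase, dpol_pair _ _ hyz.1] at h0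
      have h1 : KH y - KH z = 0 := by nlinarith [h0]
      linarith
    have hconst : ∀ y : ℕ, rel u y → KH y = KH u := by
      intro y hry
      induction hry with
      | refl => rfl
      | tail h1 h2 ih => rw [← hadj_eq _ _ h2]; exact ih
    calc (∑ y : {y // y ∈ nbrs F x}, w y * k y)
        = ∑ y ∈ nbrs F x, WH y * KH y := by
          rw [← hke, hw]
          exact Finset.sum_coe_sort (nbrs F x) (fun y => WH y * KH y)
      _ = ∑ y ∈ C, WH y * KH y := by
          refine (Finset.sum_subset hCsub (fun y _ hyC => ?_)).symm
          rw [hWH]; simp [hyC]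
      _ = ∑ y ∈ C, WH y * KH u := by
          refine Finset.sum_congr rfl fun y hy => ?_
          rw [hconst y (Finset.mem_filter.1 hy).2]
      _ = (∑ y ∈ C, WH y) * KH u := by rw [Finset.sum_mul]
      _ = 0 := by rw [hsumWH]; ring
  -- apply the spectral lemma with β = 0
  have hfpos : 0 < ∑ y : {y // y ∈ nbrs F x}, w y * w y := by
    rw [hnorm]; nlinarith [hmR2]
  have hkersq : ∀ k : {y // y ∈ nbrs F x} → ℝ, (LxM F x).mulVec k = 0 →
      (∑ y : {y // y ∈ nbrs F x}, w y * k y)^2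
        ≤ 0 * (∑ y : {y // y ∈ nbrs F x}, k y * k y)
            * (∑ y : {y // y ∈ nbrs F x}, w y * w y) := by
    intro k hk
    rw [hker k hk]
    norm_num
  obtain ⟨μ, g, hμ, hg, heig, hineq⟩ := spec_main (LxM F x) (LxM_psd hF) w 0 le_rfl
    (by norm_num) hfpos hkersq
  refine ⟨μ, g, m, hμ, hg, heig, hm2, hdeg_le, ?_⟩
  rw [hnorm, hnum] at hineq
  calc μ * (mR * (mR - 1)) = μ * ((1 - 0) * (mR * (mR - 1))) := by ring
    _ ≤ dgrF F x u * mR^2 := hineq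

end moreaux3

noncomputable section moreaux4
open scoped Classical
open Finset Matrix

variable {F : Finset (Finset ℕ)} {x : ℕ}

lemma sgn_sq (x y : ℕ) : sgn x y * sgn x y = 1 := by
  rw [sgn]; split_ifs <;> norm_num

lemma triSign_sq {T e : Finset ℕ} (h1 : e ⊆ T) (h2 : e.card = 2) (h3 : T.card = 3) :
    triSign T e * triSign T e = 1 := by
  rw [triSign, if_pos ⟨h1, h2, h3⟩]
  split_ifs <;> norm_num

lemma delta_psd : ((delta1 F)ᵀ * delta1 F).PosSemidef := by
  rw [← Matrix.conjTranspose_eq_transpose_of_trivial]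
  exact Matrix.posSemidef_conjTranspose_mul_self _

lemma dot_deltas (v : {e // e ∈ edgesOf F} → ℝ) :
    (∑ e : {e // e ∈ edgesOf F}, v e * (((delta1 F)ᵀ * delta1 F).mulVec v) e)
      = ∑ T : {T // T ∈ F}, ((delta1 F).mulVec v) T * ((delta1 F).mulVec v) T := by
  have h1 : (((delta1 F)ᵀ * delta1 F).mulVec v) = (delta1 F)ᵀ.mulVec ((delta1 F).mulVec v) := by
    rw [Matrix.mulVec_mulVec]
  rw [h1]
  have h2 : (∑ e : {e // e ∈ edgesOf F}, v e * ((delta1 F)ᵀ.mulVec ((delta1 F).mulVec v)) e)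
      = dotProduct v ((delta1 F)ᵀ.mulVec ((delta1 F).mulVec v)) := rfl
  rw [h2, dotProduct_mulVec, Matrix.vecMul_transpose]
  rfl

lemma ker_transfer {k : {e // e ∈ edgesOf F} → ℝ}
    (hk : (((delta1 F)ᵀ * delta1 F)).mulVec k = 0) : (delta1 F).mulVec k = 0 := by
  have h0 : (∑ T : {T // T ∈ F}, ((delta1 F).mulVec k) T * ((delta1 F).mulVec k) T) = 0 := by
    rw [← dot_deltas k, hk]
    simp
  funext T
  have hnn : ∀ T ∈ Finset.univ (α := {T // T ∈ F}),
      0 ≤ ((delta1 F).mulVec k) T * ((delta1 F).mulVec k) T :=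
    fun T _ => mul_self_nonneg _
  have := (Finset.sum_eq_zero_iff_of_nonneg hnn).1 h0 T (Finset.mem_univ T)
  have := mul_self_eq_zero.1 this
  simpa using this

/-- membership of sub-pairs of triangles in `edgesOf` -/
lemma pc2_sub_edges {T : Finset ℕ} (hT : T ∈ F) : T.powersetCard 2 ⊆ edgesOf F :=
  fun e he => Finset.mem_biUnion.2 ⟨T, hT, he⟩

/-- evaluation of a row of `delta1` against an edge-function -/
lemma af_eval (hF : IsTriFam F) (eb : Finset ℕ → ℝ) {T : Finset ℕ} (hT : T ∈ F) :
    ((delta1 F).mulVec (fun e => eb e.1)) ⟨T, hT⟩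
      = ∑ e ∈ T.powersetCard 2, triSign T e * eb e := by
  have h1 : ((delta1 F).mulVec (fun e => eb e.1)) ⟨T, hT⟩
      = ∑ e : {e // e ∈ edgesOf F}, triSign T e.1 * eb e.1 := rfl
  rw [h1, Finset.sum_coe_sort (edgesOf F) (fun e => triSign T e * eb e)]
  refine (Finset.sum_subset (pc2_sub_edges hT) ?_).symm
  intro e _ hepc
  have : ¬ (e ⊆ T ∧ e.card = 2 ∧ T.card = 3) := by
    intro ⟨hs, hc, _⟩
    exact hepc (Finset.mem_powersetCard.2 ⟨hs, hc⟩)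
  rw [triSign_zero this, zero_mul]

lemma pair_ne_left {x a b : ℕ} (hxa : x ≠ a) (hxb : x ≠ b) (hab : a ≠ b) :
    ({x,a} : Finset ℕ) ≠ {x,b} := by
  intro h
  have : (b:ℕ) ∈ ({x,a} : Finset ℕ) := h ▸ (by simp : (b:ℕ) ∈ ({x,b} : Finset ℕ))
  simp only [Finset.mem_insert, Finset.mem_singleton] at this
  rcases this with h'|h' <;> [exact hxb h'.symm; exact hab h'.symm]

lemma pair_ne_noxa {x a b : ℕ} (hxa : x ≠ a) (hxb : x ≠ b) :
    ({x,a} : Finset ℕ) ≠ {a,b} := by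
  intro h
  have : (x:ℕ) ∈ ({a,b} : Finset ℕ) := h ▸ (by simp : (x:ℕ) ∈ ({x,a} : Finset ℕ))
  simp only [Finset.mem_insert, Finset.mem_singleton] at this
  tauto

/-- row evaluation for a triangle `{x,a,b}` -/
lemma af_eval_tri (hF : IsTriFam F) (eb : Finset ℕ → ℝ) {T : Finset ℕ} (hT : T ∈ F)
    {a b : ℕ} (hTeq : T = {x,a,b}) (hxa : x ≠ a) (hxb : x ≠ b) (hab : a ≠ b) :
    ((delta1 F).mulVec (fun e => eb e.1)) ⟨T, hT⟩
      = triSign T {x,a} * eb {x,a} + triSign T {x,b} * eb {x,b}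
        + triSign T {a,b} * eb {a,b} := by
  rw [af_eval hF eb hT]
  subst hTeq
  rw [pc2_triple hxa hxb hab]
  rw [Finset.sum_insert (by
      simp only [Finset.mem_insert, Finset.mem_singleton]
      push_neg
      exact ⟨pair_ne_left hxa hxb hab, pair_ne_noxa hxa hxb⟩),
    Finset.sum_insert (by
      simp only [Finset.mem_singleton]
      have := pair_ne_noxa hxb hxa
      intro hcon
      apply this
      rw [hcon]
      ext t; simp only [Finset.mem_insert, Finset.mem_singleton]; tauto),
    Finset.sum_singleton]
  ring

/-- structure of edges containing x -/
lemma edge_struct (hF : IsTriFam F) {e : Finset ℕ} (he : e ∈ edgesOf F) (hxe : x ∈ e) :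
    ∃ y, x ≠ y ∧ e = {x,y} ∧ y ∈ nbrs F x := by
  obtain ⟨T, hTF, hepc⟩ := Finset.mem_biUnion.1 he
  obtain ⟨hsub, hcard⟩ := Finset.mem_powersetCard.1 hepc
  obtain ⟨u, v, huv, rfl⟩ := Finset.card_eq_two.1 hcard
  have hxuv : x = u ∨ x = v := by
    simp only [Finset.mem_insert, Finset.mem_singleton] at hxe; exact hxe
  have hmemT : ∀ w ∈ ({u,v} : Finset ℕ), w ∈ T := fun w hw => hsub hw
  rcases hxuv with rfl|rfl
  · refine ⟨v, huv, rfl, ?_⟩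
    rw [nbrs, Finset.mem_filter]
    exact ⟨Finset.mem_biUnion.2 ⟨T, hTF, hmemT v (by simp)⟩, huv,
      ⟨T, hTF, hmemT x (by simp), hmemT v (by simp)⟩⟩
  · refine ⟨u, Ne.symm huv, by rw [Finset.pair_comm], ?_⟩
    rw [nbrs, Finset.mem_filter]
    exact ⟨Finset.mem_biUnion.2 ⟨T, hTF, hmemT u (by simp)⟩, Ne.symm huv,
      ⟨T, hTF, hmemT x (by simp), hmemT u (by simp)⟩⟩

lemma pair_mem_edges (hF : IsTriFam F) {y : ℕ} (hy : y ∈ nbrs F x) :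
    ({x,y} : Finset ℕ) ∈ edgesOf F ∧ x ≠ y := by
  rw [nbrs, Finset.mem_filter] at hy
  obtain ⟨-, hxy, T, hTF, hxT, hyT⟩ := hy
  refine ⟨Finset.mem_biUnion.2 ⟨T, hTF, Finset.mem_powersetCard.2
    ⟨?_, card_pair' hxy⟩⟩, hxy⟩
  intro t ht
  simp only [Finset.mem_insert, Finset.mem_singleton] at ht
  rcases ht with rfl|rfl <;> assumption

/-- x-edge sum: sums over edges containing x equal sums over neighbours -/
lemma xedge_sum (hF : IsTriFam F) (φ : Finset ℕ → ℝ) :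
    (∑ e ∈ edgesOf F, (if x ∈ e then φ e else 0)) = ∑ y ∈ nbrs F x, φ {x,y} := by
  rw [← Finset.sum_filter]
  refine Finset.sum_nbij' (fun e => (e.erase x).sum id) (fun y => ({x,y} : Finset ℕ))
    ?_ ?_ ?_ ?_ ?_
  · intro e he
    obtain ⟨hee, hxe⟩ := Finset.mem_filter.1 he
    obtain ⟨y, hxy, rfl, hyN⟩ := edge_struct hF hee hxe
    rw [pair_erase_left hxy, Finset.sum_singleton]
    simp only [id_eq]
    exact hyN
  · intro y hy
    obtain ⟨hmem, hxy⟩ := pair_mem_edges hF hy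
    exact Finset.mem_filter.2 ⟨hmem, by simp⟩
  · intro e he
    obtain ⟨hee, hxe⟩ := Finset.mem_filter.1 he
    obtain ⟨y, hxy, heq, hyN⟩ := edge_struct hF hee hxe
    rw [heq, pair_erase_left hxy, Finset.sum_singleton]
    simp only [id_eq]
  · intro y hy
    obtain ⟨hmem, hxy⟩ := pair_mem_edges hF hy
    rw [pair_erase_left hxy, Finset.sum_singleton]
    simp only [id_eq]
  · intro e he
    obtain ⟨hee, hxe⟩ := Finset.mem_filter.1 he
    obtain ⟨y, hxy, heq, hyN⟩ := edge_struct hF hee hxe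
    rw [heq, pair_erase_left hxy, Finset.sum_singleton]
    simp only [id_eq]

/-- splitting the edge set: x-edges and link edges are disjoint -/
lemma edge_split (hF : IsTriFam F) (ψ : Finset ℕ → ℝ) (hψ : ∀ e, 0 ≤ ψ e) :
    (∑ e ∈ (edgesOf F).filter (fun e => x ∈ e), ψ e) + (∑ T ∈ FxF F x, ψ (T.erase x))
      ≤ ∑ e ∈ edgesOf F, ψ e := by
  have himg : (∑ T ∈ FxF F x, ψ (T.erase x))
      = ∑ e ∈ (FxF F x).image (fun T => T.erase x), ψ e := by
    rw [Finset.sum_image]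
    intro T hT T' hT' heq
    have h1 : x ∈ T := (mem_FxF_iff.1 hT).2
    have h2 : x ∈ T' := (mem_FxF_iff.1 hT').2
    rw [← Finset.insert_erase h1, ← Finset.insert_erase h2, show T.erase x = T'.erase x from heq]
  rw [himg]
  have hsub : (FxF F x).image (fun T => T.erase x) ⊆ (edgesOf F).filter (fun e => x ∉ e) := by
    intro e he
    obtain ⟨T, hT, rfl⟩ := Finset.mem_image.1 he
    obtain ⟨hTF, hxT⟩ := mem_FxF_iff.1 hT
    refine Finset.mem_filter.2 ⟨Finset.mem_biUnion.2 ⟨T, hTF, ?_⟩, Finset.notMem_erase _ _⟩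
    exact Finset.mem_powersetCard.2 ⟨Finset.erase_subset _ _,
      by rw [Finset.card_erase_of_mem hxT, hF.2 _ hTF]⟩
  have hle : (∑ e ∈ (FxF F x).image (fun T => T.erase x), ψ e)
      ≤ ∑ e ∈ (edgesOf F).filter (fun e => x ∉ e), ψ e :=
    Finset.sum_le_sum_of_subset_of_nonneg hsub (fun e _ _ => hψ e)
  have hsplit := Finset.sum_filter_add_sum_filter_not (edgesOf F) (fun e => x ∈ e) ψ
  linarith

/-- expansion of the polar form -/
lemma dpol_expand (H K : ℕ → ℝ) (t : ℝ) (e : Finset ℕ) :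
    dpol (fun y => H y + t * K y) (fun y => H y + t * K y) e
      = dpol H H e + 2*t*dpol H K e + t^2 * dpol K K e := by
  unfold dpol
  have h1 : (∑ y ∈ e, (H y + t*K y) * (H y + t*K y))
      = (∑ y ∈ e, H y * H y) + 2*t*(∑ y ∈ e, H y * K y) + t^2*(∑ y ∈ e, K y * K y) := by
    calc (∑ y ∈ e, (H y + t*K y) * (H y + t*K y))
        = ∑ y ∈ e, (H y * H y + ((2*t)*(H y * K y) + (t^2)*(K y * K y))) :=
          Finset.sum_congr rfl fun y _ => by ring
      _ = _ := by
          rw [Finset.sum_add_distrib, Finset.sum_add_distrib, ← Finset.mul_sum,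
            ← Finset.mul_sum]
          ring
  have h2 : (∑ y ∈ e, (H y + t*K y)) = (∑ y ∈ e, H y) + t*(∑ y ∈ e, K y) := by
    rw [Finset.sum_add_distrib, ← Finset.mul_sum]
  rw [h1, h2]
  ring

lemma dpol_symm (H K : ℕ → ℝ) (e : Finset ℕ) : dpol H K e = dpol K H e := by
  unfold dpol
  have : (∑ y ∈ e, H y * K y) = ∑ y ∈ e, K y * H y :=
    Finset.sum_congr rfl fun y _ => by ring
  rw [this]; ring

end moreaux4

noncomputable section moreaux5
open scoped Classical
open Finset Matrix

variable {F : Finset (Finset ℕ)} {x : ℕ}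

lemma stage1 (hF : IsTriFam F) {μ : ℝ} {g : {y // y ∈ nbrs F x} → ℝ}
    (hμ : 0 < μ) (hg : g ≠ 0) (heig : (LxM F x).mulVec g = μ • g) :
    lam F ≤ 1 + μ := by
  classical
  set gH : ℕ → ℝ := fun y => if hy : y ∈ nbrs F x then g ⟨y, hy⟩ else 0 with hgH
  have hge : (fun z : {y // y ∈ nbrs F x} => gH z.1) = g := by
    funext z; rw [hgH]; simp only [dif_pos z.2]
  have heig' : ∀ y : {y // y ∈ nbrs F x}, ((LxM F x).mulVec g) y = μ * g y := by
    intro y; rw [heig]; rfl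
  set ebf : Finset ℕ → ℝ :=
    fun e => if x ∈ e then (∑ y ∈ e.erase x, sgn x y * gH y) else 0 with hebf
  set fv : {e // e ∈ edgesOf F} → ℝ := fun e => ebf e.1 with hfv
  set G2 : ℝ := ∑ y ∈ nbrs F x, gH y * gH y with hG2
  have hG2sub : G2 = ∑ y : {y // y ∈ nbrs F x}, g y * g y := by
    rw [hG2, ← Finset.sum_coe_sort (nbrs F x) (fun y => gH y * gH y)]
    refine Finset.sum_congr rfl fun y _ => ?_
    rw [hgH]; simp only [dif_pos y.2]
  have hG2pos : 0 < G2 := by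
    rw [hG2sub]
    have hex : ∃ y, g y ≠ 0 := by
      by_contra hno; push_neg at hno; exact hg (funext fun y => hno y)
    obtain ⟨y0, hy0⟩ := hex
    have h1 : 0 < g y0 * g y0 := mul_self_pos.2 hy0
    have h2 : g y0 * g y0 ≤ ∑ y, g y * g y :=
      Finset.single_le_sum (fun y _ => mul_self_nonneg (g y)) (Finset.mem_univ y0)
    linarith
  have hebf_pair : ∀ y : ℕ, x ≠ y → ebf {x,y} = sgn x y * gH y := by
    intro y hxy
    rw [hebf]; dsimp only
    rw [if_pos (by simp), pair_erase_left hxy, Finset.sum_singleton]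
  have hfnorm : (∑ e : {e // e ∈ edgesOf F}, fv e * fv e) = G2 := by
    rw [hfv]
    rw [Finset.sum_coe_sort (edgesOf F) (fun e => ebf e * ebf e)]
    have hsp : ∀ e ∈ edgesOf F, ebf e * ebf e = if x ∈ e then ebf e * ebf e else 0 := by
      intro e _
      by_cases hxe : x ∈ e
      · rw [if_pos hxe]
      · rw [if_neg hxe, hebf]; dsimp only; rw [if_neg hxe]; ring
    rw [Finset.sum_congr rfl hsp, xedge_sum hF (fun e => ebf e * ebf e), hG2]
    refine Finset.sum_congr rfl fun y hy => ?_
    have hxy : x ≠ y := (pair_mem_edges hF hy).2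
    rw [hebf_pair y hxy]
    calc (sgn x y * gH y) * (sgn x y * gH y)
        = (sgn x y * sgn x y) * (gH y * gH y) := by ring
      _ = gH y * gH y := by rw [sgn_sq]; ring
  -- the quadratic form of gH equals μ * G2
  have hQgg : (∑ T ∈ FxF F x, dpol gH gH (T.erase x)) = μ * G2 := by
    rw [← QF2 hF gH gH, hge]
    calc (∑ y : {y // y ∈ nbrs F x}, gH y.1 * ((LxM F x).mulVec g) y)
        = ∑ y : {y // y ∈ nbrs F x}, gH y.1 * (μ * g y) :=
          Finset.sum_congr rfl fun y _ => by rw [heig' y]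
      _ = μ * ∑ y : {y // y ∈ nbrs F x}, g y * g y := by
          rw [Finset.mul_sum]
          refine Finset.sum_congr rfl fun y _ => ?_
          rw [hgH]; simp only [dif_pos y.2]; ring
      _ = μ * G2 := by rw [hG2sub]
  -- row values
  have hAf : ∀ (T : Finset ℕ) (hT : T ∈ F), x ∈ T →
      ((delta1 F).mulVec fv) ⟨T, hT⟩ * ((delta1 F).mulVec fv) ⟨T, hT⟩
        = dpol gH gH (T.erase x) := by
    intro T hT hxT
    have hTx : T ∈ FxF F x := mem_FxF_iff.2 ⟨hT, hxT⟩
    obtain ⟨a, b, hab, he, hTeq, hadj, hxa, hxb, haN, hbN⟩ := FxF_struct hF hTx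
    rw [hfv, af_eval_tri hF ebf hT hTeq hxa hxb hab]
    rw [hebf_pair a hxa, hebf_pair b hxb]
    have hz : ebf {a,b} = 0 := by
      rw [hebf]; dsimp only
      rw [if_neg (by
        simp only [Finset.mem_insert, Finset.mem_singleton]
        push_neg
        exact ⟨hxa, hxb⟩)]
    rw [hz, he, dpol_pair _ _ hab, hTeq]
    obtain ⟨hpp, hpq, hqq⟩ := sign_prod hxa hxb hab
    linear_combination (gH a * gH a) * hpp + (2 * gH a * gH b) * hpq + (gH b * gH b) * hqq
  have hAf0 : ∀ (T : Finset ℕ) (hT : T ∈ F), x ∉ T →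
      ((delta1 F).mulVec fv) ⟨T, hT⟩ = 0 := by
    intro T hT hxT
    rw [hfv, af_eval hF ebf hT]
    refine Finset.sum_eq_zero fun e hepc => ?_
    obtain ⟨hsub, hcard⟩ := Finset.mem_powersetCard.1 hepc
    have hxe : x ∉ e := fun hxe => hxT (hsub hxe)
    rw [hebf]; dsimp only
    rw [if_neg hxe, mul_zero]
  -- numerator
  have hnum : (∑ e : {e // e ∈ edgesOf F},
      fv e * ((((delta1 F)ᵀ * delta1 F)).mulVec fv) e) = μ * G2 := by
    rw [dot_deltas fv]
    have hsp : ∀ T : {T // T ∈ F},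
        ((delta1 F).mulVec fv) T * ((delta1 F).mulVec fv) T
          = if x ∈ T.1 then dpol gH gH (T.1.erase x) else 0 := by
      intro T
      by_cases hxT : x ∈ T.1
      · rw [if_pos hxT, ← hAf T.1 T.2 hxT]
      · rw [if_neg hxT, hAf0 T.1 T.2 hxT]; ring
    rw [Finset.sum_congr rfl (fun T _ => hsp T)]
    rw [Finset.sum_coe_sort F (fun T => if x ∈ T then dpol gH gH (T.erase x) else 0)]
    rw [← Finset.sum_filter]
    exact hQgg
  -- kernel bound
  set β : ℝ := 1/(1+μ) with hβ
  have hμ1 : (0:ℝ) < 1 + μ := by linarith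
  have hβ0 : 0 ≤ β := by positivity
  have hβ1 : β < 1 := by
    rw [hβ, div_lt_one hμ1]; linarith
  have hker : ∀ k : {e // e ∈ edgesOf F} → ℝ,
      (((delta1 F)ᵀ * delta1 F)).mulVec k = 0 →
      (∑ e : {e // e ∈ edgesOf F}, fv e * k e)^2
        ≤ β * (∑ e : {e // e ∈ edgesOf F}, k e * k e)
            * (∑ e : {e // e ∈ edgesOf F}, fv e * fv e) := by
    intro k hk
    have hAk := ker_transfer hk
    set kb : Finset ℕ → ℝ := fun e => if he : e ∈ edgesOf F then k ⟨e, he⟩ else 0 with hkb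
    have hkbe : (fun e : {e // e ∈ edgesOf F} => kb e.1) = k := by
      funext e; rw [hkb]; simp only [dif_pos e.2]
    set hH : ℕ → ℝ := fun y => sgn x y * kb {x,y} with hhH
    have hrel : ∀ T ∈ FxF F x,
        dpol hH hH (T.erase x) = kb (T.erase x) * kb (T.erase x) := by
      intro T hT
      obtain ⟨a, b, hab, he, hTeq, hadj, hxa, hxb, haN, hbN⟩ := FxF_struct hF hT
      have hTF : T ∈ F := (mem_FxF_iff.1 hT).1
      have h0 : ((delta1 F).mulVec k) ⟨T, hTF⟩ = 0 := by rw [hAk]; rfl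
      rw [← hkbe, af_eval_tri hF kb hTF hTeq hxa hxb hab, hTeq] at h0
      obtain ⟨hpp, hpq, hqq⟩ := sign_prod hxa hxb hab
      have hs3 : triSign {x,a,b} {a,b} * triSign {x,a,b} {a,b} = 1 := by
        refine triSign_sq ?_ (card_pair' hab) (card_triple hxa hxb hab)
        intro t ht; simp only [Finset.mem_insert, Finset.mem_singleton] at ht ⊢; tauto
      have hsa := sgn_sq x a
      have hsb := sgn_sq x b
      have h0' : (triSign {x,a,b} {x,a} * sgn x a) * (sgn x a * kb {x,a})
          + (triSign {x,a,b} {x,b} * sgn x b) * (sgn x b * kb {x,b})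
          + triSign {x,a,b} {a,b} * kb {a,b} = 0 := by
        linear_combination h0 + (triSign {x,a,b} {x,a} * kb {x,a}) * hsa
          + (triSign {x,a,b} {x,b} * kb {x,b}) * hsb
      rw [he, dpol_pair _ _ hab, hhH]
      dsimp only
      linear_combination
        ((triSign {x,a,b} {x,a} * sgn x a) * (sgn x a * kb {x,a})
          + (triSign {x,a,b} {x,b} * sgn x b) * (sgn x b * kb {x,b})
          - triSign {x,a,b} {a,b} * kb {a,b}) * h0'
        - (sgn x a * kb {x,a})^2 * hpp
        - (2 * (sgn x a * kb {x,a}) * (sgn x b * kb {x,b})) * hpq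
        - (sgn x b * kb {x,b})^2 * hqq
        + (kb {a,b})^2 * hs3
    -- pairing
    have hpair : (∑ e : {e // e ∈ edgesOf F}, fv e * k e)
        = ∑ y ∈ nbrs F x, gH y * hH y := by
      rw [← hkbe, hfv]
      rw [Finset.sum_coe_sort (edgesOf F) (fun e => ebf e * kb e)]
      have hsp : ∀ e ∈ edgesOf F, ebf e * kb e = if x ∈ e then ebf e * kb e else 0 := by
        intro e _
        by_cases hxe : x ∈ e
        · rw [if_pos hxe]
        · rw [if_neg hxe, hebf]; dsimp only; rw [if_neg hxe]; ring
      rw [Finset.sum_congr rfl hsp, xedge_sum hF (fun e => ebf e * kb e)]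
      refine Finset.sum_congr rfl fun y hy => ?_
      have hxy : x ≠ y := (pair_mem_edges hF hy).2
      rw [hebf_pair y hxy, hhH]
      dsimp only
      ring
    set IP : ℝ := ∑ y ∈ nbrs F x, gH y * hH y with hIP
    have hcross : (∑ T ∈ FxF F x, dpol hH gH (T.erase x)) = μ * IP := by
      rw [← QF2 hF hH gH, hge]
      calc (∑ y : {y // y ∈ nbrs F x}, hH y.1 * ((LxM F x).mulVec g) y)
          = ∑ y : {y // y ∈ nbrs F x}, hH y.1 * (μ * g y) :=
            Finset.sum_congr rfl fun y _ => by rw [heig' y]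
        _ = μ * ∑ y : {y // y ∈ nbrs F x}, gH y.1 * hH y.1 := by
            rw [Finset.mul_sum]
            refine Finset.sum_congr rfl fun y _ => ?_
            rw [hgH]; simp only [dif_pos y.2]; ring
        _ = μ * IP := by
            rw [hIP, Finset.sum_coe_sort (nbrs F x) (fun y => gH y * hH y)]
    set Qh : ℝ := (∑ y ∈ nbrs F x, hH y * hH y)
      + ∑ T ∈ FxF F x, dpol hH hH (T.erase x) with hQh
    have hQh0 : 0 ≤ Qh := by
      have h1 : 0 ≤ ∑ y ∈ nbrs F x, hH y * hH y :=
        Finset.sum_nonneg fun y _ => mul_self_nonneg _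
      have h2 : 0 ≤ ∑ T ∈ FxF F x, dpol hH hH (T.erase x) := by
        refine Finset.sum_nonneg fun T hT => ?_
        rw [hrel T hT]; exact mul_self_nonneg _
      rw [hQh]; linarith
    -- discriminant estimate
    have hQQ : ∀ t : ℝ, 0 ≤ (G2 + μ * G2) * (t*t) + (2 * (IP + μ * IP)) * t + Qh := by
      intro t
      set Ht : ℕ → ℝ := fun y => hH y + t * gH y with hHt
      have hnn : 0 ≤ (∑ y ∈ nbrs F x, Ht y * Ht y)
          + ∑ T ∈ FxF F x, dpol Ht Ht (T.erase x) := by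
        have h1 : 0 ≤ ∑ y ∈ nbrs F x, Ht y * Ht y :=
          Finset.sum_nonneg fun y _ => mul_self_nonneg _
        have h2 : 0 ≤ ∑ T ∈ FxF F x, dpol Ht Ht (T.erase x) := by
          refine Finset.sum_nonneg fun T hT => ?_
          obtain ⟨a, b, hab, he, -, -, -, -, -, -⟩ := FxF_struct hF hT
          rw [he, dpol_pair _ _ hab]; exact mul_self_nonneg _
        linarith
      have e1 : (∑ y ∈ nbrs F x, Ht y * Ht y)
          = (∑ y ∈ nbrs F x, hH y * hH y) + 2*t*IP + t^2 * G2 := by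
        rw [hIP, hG2]
        calc (∑ y ∈ nbrs F x, Ht y * Ht y)
            = ∑ y ∈ nbrs F x, (hH y * hH y
                + ((2*t) * (gH y * hH y) + (t^2) * (gH y * gH y))) := by
              refine Finset.sum_congr rfl fun y _ => ?_
              rw [hHt]; dsimp only; ring
          _ = _ := by
              rw [Finset.sum_add_distrib, Finset.sum_add_distrib, ← Finset.mul_sum,
                ← Finset.mul_sum]
              ring
      have e2 : (∑ T ∈ FxF F x, dpol Ht Ht (T.erase x))
          = (∑ T ∈ FxF F x, dpol hH hH (T.erase x))
            + 2*t*(∑ T ∈ FxF F x, dpol hH gH (T.erase x))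
            + t^2 * (∑ T ∈ FxF F x, dpol gH gH (T.erase x)) := by
        calc (∑ T ∈ FxF F x, dpol Ht Ht (T.erase x))
            = ∑ T ∈ FxF F x, (dpol hH hH (T.erase x)
                + ((2*t) * dpol hH gH (T.erase x) + (t^2) * dpol gH gH (T.erase x))) := by
              refine Finset.sum_congr rfl fun T _ => ?_
              rw [hHt]
              have := dpol_expand hH gH t (T.erase x)
              rw [this]; ring
          _ = _ := by
              rw [Finset.sum_add_distrib, Finset.sum_add_distrib, ← Finset.mul_sum,
                ← Finset.mul_sum]
              ring
      rw [e1, e2, hcross, hQgg] at hnn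
      rw [hQh]
      nlinarith [hnn]
    have hdisc := discrim_le_zero hQQ
    rw [discrim] at hdisc
    have hCS : ((1+μ) * IP)^2 ≤ ((1+μ) * G2) * Qh := by nlinarith [hdisc]
    have hQhle : Qh ≤ ∑ e : {e // e ∈ edgesOf F}, k e * k e := by
      have hk2 : (∑ e : {e // e ∈ edgesOf F}, k e * k e)
          = ∑ e ∈ edgesOf F, kb e * kb e := by
        rw [← hkbe]
        exact Finset.sum_coe_sort (edgesOf F) (fun e => kb e * kb e)
      rw [hk2, hQh]
      have hxpart : (∑ y ∈ nbrs F x, hH y * hH y)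
          = ∑ e ∈ (edgesOf F).filter (fun e => x ∈ e), kb e * kb e := by
        rw [Finset.sum_filter, xedge_sum hF (fun e => kb e * kb e)]
        refine Finset.sum_congr rfl fun y hy => ?_
        rw [hhH]; dsimp only
        calc (sgn x y * kb {x,y}) * (sgn x y * kb {x,y})
            = (sgn x y * sgn x y) * (kb {x,y} * kb {x,y}) := by ring
          _ = kb {x,y} * kb {x,y} := by rw [sgn_sq]; ring
      have hlinkpart : (∑ T ∈ FxF F x, dpol hH hH (T.erase x))
          = ∑ T ∈ FxF F x, kb (T.erase x) * kb (T.erase x) :=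
        Finset.sum_congr rfl hrel
      rw [hxpart, hlinkpart]
      exact edge_split hF (fun e => kb e * kb e) (fun e => mul_self_nonneg _)
    rw [hpair, hfnorm]
    have hCS' : (1+μ) * ((1+μ) * IP^2) ≤ (1+μ) * (G2 * Qh) := by nlinarith [hCS]
    have step1 : (1+μ) * IP^2 ≤ G2 * Qh := le_of_mul_le_mul_left hCS' hμ1
    have step2 : IP^2 ≤ β * (G2 * Qh) := by
      rw [hβ]
      rw [div_mul_eq_mul_div, one_mul, le_div_iff₀ hμ1]
      linarith [step1]
    have step3 : β * (G2 * Qh) ≤ β * ((∑ e : {e // e ∈ edgesOf F}, k e * k e) * G2) := by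
      apply mul_le_mul_of_nonneg_left _ hβ0
      calc G2 * Qh = Qh * G2 := by ring
        _ ≤ (∑ e : {e // e ∈ edgesOf F}, k e * k e) * G2 :=
          mul_le_mul_of_nonneg_right hQhle (le_of_lt hG2pos)
    calc IP^2 ≤ β * (G2 * Qh) := step2
      _ ≤ β * ((∑ e : {e // e ∈ edgesOf F}, k e * k e) * G2) := step3
      _ = β * (∑ e : {e // e ∈ edgesOf F}, k e * k e) * G2 := by ring
  -- apply the spectral lemma
  obtain ⟨ν, gv, hν, hgv, heigv, hineq⟩ := spec_main ((delta1 F)ᵀ * delta1 F) delta_psd fv β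
    hβ0 hβ1 (by rw [hfnorm]; exact hG2pos) hker
  rw [hfnorm, hnum] at hineq
  have h1mβ : 1 - β = μ / (1+μ) := by
    rw [hβ]; field_simp; ring
  have hνle : ν ≤ 1 + μ := by
    rw [h1mβ] at hineq
    by_contra hgt
    push_neg at hgt
    have hpos : 0 < μ / (1+μ) * G2 := by positivity
    have h2 : (1+μ) * (μ/(1+μ) * G2) < ν * (μ/(1+μ) * G2) :=
      mul_lt_mul_of_pos_right hgt hpos
    have h3 : (1+μ) * (μ/(1+μ) * G2) = μ * G2 := by
      field_simp
    rw [h3] at h2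
    linarith
  have hlamle : lam F ≤ ν := by
    rw [lam, lambdaMinPos]
    refine csInf_le ⟨0, fun r hr => le_of_lt hr.1⟩ ?_
    exact ⟨hν, gv, hgv, heigv⟩
  linarith

end moreaux5

noncomputable section moreaux6
open scoped Classical
open Finset Matrix

variable {F : Finset (Finset ℕ)} {x : ℕ}

lemma dgr_card (u : ℕ) :
    dgrF F x u = (((nbrs F x).filter (fun z => adjF F x u z)).card : ℝ) := by
  rw [dgrF, Finset.sum_boole]

lemma deg_lower (hF : IsTriFam F) {n : ℕ} (hn : 9 ≤ n) (hlam : (n:ℝ) - 1 < lam F)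
    {u z : ℕ} (huz : adjF F x u z) : ((n:ℝ)) - 2 ≤ dgrF F x u := by
  obtain ⟨μ, g, m, hμ, hg, heig, hm2, hdle, hineq⟩ := stage2 hF huz
  have h1 := stage1 hF hμ hg heig
  have hμgt : (n:ℝ) - 2 < μ := by linarith
  set mR : ℝ := (m:ℝ) with hmRdef
  have hmR2 : (2:ℝ) ≤ mR := by rw [hmRdef]; exact_mod_cast hm2
  set d : ℝ := dgrF F x u with hd
  have hfac : (0:ℝ) < mR * (mR - 1) := by nlinarith
  have hstep : μ * (mR * (mR - 1)) ≤ mR * (mR * (mR - 1)) := by nlinarith [hineq, hdle]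
  have s1 : μ ≤ mR := by
    have h := (mul_le_mul_iff_of_pos_right hfac).1 hstep
    exact h
  have hmpos : (0:ℝ) < mR := by linarith
  have h2 : μ * (mR - 1) ≤ d * mR := by
    have hx2 : (μ*(mR-1))*mR ≤ (d*mR)*mR := by nlinarith [hineq]
    exact (mul_le_mul_iff_of_pos_right hmpos).1 hx2
  have h3 : (μ - 1) * mR ≤ μ * (mR - 1) := by nlinarith [s1]
  have s2 : μ - 1 ≤ d := by
    have hx3 : (μ-1)*mR ≤ d*mR := le_trans h3 h2
    exact (mul_le_mul_iff_of_pos_right hmpos).1 hx3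
  -- integrality: d is a natural number
  set du : ℕ := ((nbrs F x).filter (fun z => adjF F x u z)).card with hdu
  have hdc : d = (du:ℝ) := by rw [hd, dgr_card u]
  have hgt : (n:ℝ) - 3 < (du:ℝ) := by rw [← hdc]; linarith
  have hltn : n < du + 3 := by
    have : (n:ℝ) < (du:ℝ) + 3 := by linarith
    exact_mod_cast this
  have hge : n - 2 ≤ du := by omega
  have : ((n-2 : ℕ):ℝ) ≤ (du:ℝ) := by exact_mod_cast hge
  rw [Nat.cast_sub (show 2 ≤ n by omega)] at this
  rw [hdc]
  exact_mod_cast this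

lemma vertex_bound (hF : IsTriFam F) {n : ℕ} (hn : 9 ≤ n) (hlam : (n:ℝ) - 1 < lam F)
    (hx : x ∈ vertsOf F) :
    ((n:ℝ) - 1) * ((n:ℝ) - 2) ≤ 2 * ((FxF F x).card : ℝ) := by
  classical
  rw [vertsOf] at hx
  obtain ⟨T, hTF, hxT⟩ := Finset.mem_biUnion.1 hx
  have hxT' : x ∈ T := hxT
  have hTx : T ∈ FxF F x := mem_FxF_iff.2 ⟨hTF, hxT'⟩
  obtain ⟨a, b, hab, he, hTeq, hadj, -, -, haN, hbN⟩ := FxF_struct hF hTx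
  set S := insert a ((nbrs F x).filter (fun z => adjF F x a z)) with hS
  have haS : a ∉ (nbrs F x).filter (fun z => adjF F x a z) := by
    intro h; exact (Finset.mem_filter.1 h).2.1 rfl
  have hda : (n:ℝ) - 2 ≤ dgrF F x a := deg_lower hF hn hlam hadj
  have hScard : (n:ℝ) - 1 ≤ (S.card : ℝ) := by
    rw [hS, Finset.card_insert_of_notMem haS]
    push_cast
    rw [← dgr_card a]
    linarith
  have hSsub : S ⊆ nbrs F x := by
    rw [hS]
    exact Finset.insert_subset haN (Finset.filter_subset _ _)
  have hSdeg : ∀ y ∈ S, (n:ℝ) - 2 ≤ dgrF F x y := by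
    intro y hy
    rw [hS] at hy
    rcases Finset.mem_insert.1 hy with rfl|hy'
    · exact hda
    · exact deg_lower hF hn hlam (adjF_symm (Finset.mem_filter.1 hy').2)
  have hhandshake : (∑ y ∈ nbrs F x, dgrF F x y) = 2 * ((FxF F x).card : ℝ) := by
    have hg : (∑ y ∈ nbrs F x, ∑ z ∈ nbrs F x, (if adjF F x y z then (1:ℝ) else 0))
        = ∑ T' ∈ FxF F x, ∑ y ∈ T'.erase x, ∑ z ∈ (T'.erase x).erase y, (1:ℝ) :=
      glue hF (fun _ _ => (1:ℝ))
    have hL : (∑ y ∈ nbrs F x, ∑ z ∈ nbrs F x, (if adjF F x y z then (1:ℝ) else 0))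
        = ∑ y ∈ nbrs F x, dgrF F x y := by
      refine Finset.sum_congr rfl fun y _ => ?_
      rw [dgrF]
    have hR : ∀ T' ∈ FxF F x,
        (∑ y ∈ T'.erase x, ∑ z ∈ (T'.erase x).erase y, (1:ℝ)) = 2 := by
      intro T' hT'
      obtain ⟨a', b', hab', he', -, -, -, -, -, -⟩ := FxF_struct hF hT'
      rw [he', Finset.sum_insert (by simp [hab']), Finset.sum_singleton,
        pair_erase_left hab', pair_erase_right hab', Finset.sum_singleton,
        Finset.sum_singleton]
      norm_num
    rw [← hL, hg, Finset.sum_congr rfl hR, Finset.sum_const, nsmul_eq_mul]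
    ring
  have h1 : (∑ y ∈ S, dgrF F x y) ≤ ∑ y ∈ nbrs F x, dgrF F x y := by
    refine Finset.sum_le_sum_of_subset_of_nonneg hSsub fun y _ _ => ?_
    rw [dgr_card]; positivity
  have h2 : (S.card : ℝ) * ((n:ℝ)-2) ≤ ∑ y ∈ S, dgrF F x y := by
    calc (S.card : ℝ) * ((n:ℝ)-2) = ∑ _y ∈ S, ((n:ℝ)-2) := by
          rw [Finset.sum_const, nsmul_eq_mul]
      _ ≤ ∑ y ∈ S, dgrF F x y := Finset.sum_le_sum hSdeg
  have h3 : ((n:ℝ)-1) * ((n:ℝ)-2) ≤ (S.card:ℝ) * ((n:ℝ)-2) := by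
    have hn' : (9:ℝ) ≤ (n:ℝ) := by exact_mod_cast hn
    apply mul_le_mul_of_nonneg_right hScard
    linarith
  linarith

end moreaux6

/-- If `n ≥ 9`, `C(n,3) < |𝒯| < C(n+1,3)` and `λ(𝒯) > n - 1`, then the support graph
has between `n + 1` and `n + 3` vertices. -/
theorem stmt12 (n : ℕ) (hn : 9 ≤ n) (F : Finset (Finset ℕ)) (hF : IsTriFam F)
    (h1 : n.choose 3 < F.card) (h2 : F.card < (n + 1).choose 3)
    (hlam : (n : ℝ) - 1 < lam F) :
    n + 1 ≤ (vertsOf F).card ∧ (vertsOf F).card ≤ n + 3 := by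
  classical
  set v := (vertsOf F).card with hv
  have hFsub : F ⊆ (vertsOf F).powersetCard 3 := by
    intro T hT
    exact Finset.mem_powersetCard.2
      ⟨fun z hz => Finset.mem_biUnion.2 ⟨T, hT, hz⟩, hF.2 T hT⟩
  have hcle : F.card ≤ v.choose 3 := by
    have h := Finset.card_le_card hFsub
    rwa [Finset.card_powersetCard] at h
  have hlow : n + 1 ≤ v := by
    by_contra hlt
    push_neg at hlt
    have : v.choose 3 ≤ n.choose 3 := Nat.choose_le_choose 3 (by omega)
    omega
  refine ⟨hlow, ?_⟩
  by_contra hbig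
  push_neg at hbig
  have hvert : ∀ x ∈ vertsOf F, (n-1) * (n-2) ≤ 2 * (FxF F x).card := by
    intro x hx
    have h := vertex_bound hF hn hlam hx
    have hc1 : ((n-1 : ℕ) : ℝ) = (n:ℝ) - 1 := by
      rw [Nat.cast_sub (show 1 ≤ n by omega)]; norm_num
    have hc2 : ((n-2 : ℕ) : ℝ) = (n:ℝ) - 2 := by
      rw [Nat.cast_sub (show 2 ≤ n by omega)]; norm_num
    have hchain : (((n-1) * (n-2) : ℕ) : ℝ) ≤ ((2 * (FxF F x).card : ℕ) : ℝ) := by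
      calc (((n-1)*(n-2) : ℕ):ℝ) = ((n:ℝ)-1)*((n:ℝ)-2) := by
            rw [Nat.cast_mul, hc1, hc2]
        _ ≤ 2 * ((FxF F x).card:ℝ) := h
        _ = ((2*(FxF F x).card : ℕ):ℝ) := by push_cast; ring
    exact_mod_cast hchain
  have htotal : (∑ x ∈ vertsOf F, (FxF F x).card) = 3 * F.card := by
    have hstep : ∀ x : ℕ, (FxF F x).card = ∑ T ∈ F, if x ∈ T then 1 else 0 := by
      intro x; rw [FxF, Finset.card_filter]
    calc (∑ x ∈ vertsOf F, (FxF F x).card)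
        = ∑ x ∈ vertsOf F, ∑ T ∈ F, (if x ∈ T then 1 else 0) :=
          Finset.sum_congr rfl (fun x _ => hstep x)
      _ = ∑ T ∈ F, ∑ x ∈ vertsOf F, (if x ∈ T then 1 else 0) := Finset.sum_comm
      _ = ∑ T ∈ F, 3 := by
          refine Finset.sum_congr rfl fun T hT => ?_
          rw [← Finset.card_filter]
          have heq : (vertsOf F).filter (fun x => x ∈ T) = T := by
            ext z
            simp only [Finset.mem_filter]
            constructor
            · exact fun h => h.2
            · intro hz; exact ⟨Finset.mem_biUnion.2 ⟨T, hT, hz⟩, hz⟩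
          rw [heq, hF.2 T hT]
      _ = 3 * F.card := by rw [Finset.sum_const, smul_eq_mul, mul_comm]
  have hsum : v * ((n-1)*(n-2)) ≤ 6 * F.card := by
    calc v * ((n-1)*(n-2)) = ∑ _x ∈ vertsOf F, (n-1)*(n-2) := by
          rw [Finset.sum_const, smul_eq_mul]
      _ ≤ ∑ x ∈ vertsOf F, 2 * (FxF F x).card := Finset.sum_le_sum hvert
      _ = 2 * ∑ x ∈ vertsOf F, (FxF F x).card := by rw [Finset.mul_sum]
      _ = 6 * F.card := by rw [htotal]; ring
  have hch : 6 * (n+1).choose 3 = (n+1)*n*(n-1) := by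
    have h := Nat.descFactorial_eq_factorial_mul_choose (n+1) 3
    have hdf : (n+1).descFactorial 3 = (n+1)*n*(n-1) := by
      have e1 : n + 1 - 1 = n := by omega
      have e2 : n + 1 - 2 = n - 1 := by omega
      simp only [Nat.descFactorial_succ, Nat.descFactorial_zero, e1, e2, Nat.mul_one, Nat.sub_zero]
      ring
    rw [hdf] at h
    have hfact : (3:ℕ).factorial = 6 := by decide
    rw [hfact] at h
    exact h.symm
  have hA : (n+4) * ((n-1)*(n-2)) ≤ 6 * F.card :=
    le_trans (Nat.mul_le_mul_right _ (by omega : n + 4 ≤ v)) hsum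
  have hB : 6 * F.card ≤ (n+1)*n*(n-1) - 6 := by omega
  have hC : (n+4) * ((n-1)*(n-2)) ≤ (n+1)*n*(n-1) - 6 := le_trans hA hB
  obtain ⟨m, rfl⟩ := Nat.exists_eq_add_of_le hn
  have e1 : 9 + m - 1 = m + 8 := by omega
  have e2 : 9 + m - 2 = m + 7 := by omega
  rw [e1, e2] at hC
  have hge6 : 6 ≤ (9+m+1)*(9+m)*(m+8) := by nlinarith
  have hC' : (9+m+4) * ((m+8)*(m+7)) + 6 ≤ (9+m+1)*(9+m)*(m+8) := (Nat.le_sub_iff_add_le hge6).mp hC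
  nlinarith [hC']
end
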